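/- arXiv:1603.04960 — 5 statements merged into one kernel-verified Lean document; each statement's English description precedes it below -/
import Mathlib

section
/- Let α, β, c > 0, and let ξ₁, ξ₂, Z be independent real random variables such that ξ₁ has the Gamma(α, c) distribution, ξ₂ has the Gamma(β, c) distribution, and Z has the Beta(α, β) distribution. Then the pair (Z·(ξ₁ + ξ₂), (1 − Z)·(ξ₁ + ξ₂)) has the same joint distribution as (ξ₁, ξ₂). -/
open MeasureTheory ProbabilityTheory

/-- The Gamma distribution with shape `α > 0` and scale `c > 0`: the measure on `ℝ`
with density `x ↦ x^{α−1} exp(−x/c)/(c^α Γ(α))` on `(0, ∞)`. -/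
noncomputable def gammaScaleMeasure (α c : ℝ) : Measure ℝ :=
  (volume.restrict (Set.Ioi (0 : ℝ))).withDensity
    (fun x => ENNReal.ofReal (x ^ (α - 1) * Real.exp (-x / c) / (c ^ α * Real.Gamma α)))

/-- The Beta distribution with parameters `α, β > 0`: the measure on `ℝ` with density
`x ↦ x^{α−1}(1−x)^{β−1}/B(α,β)` on `(0, 1)`, where `B(α,β) = Γ(α)Γ(β)/Γ(α+β)`. -/
noncomputable def betaMeasure (α β : ℝ) : Measure ℝ :=
  (volume.restrict (Set.Ioo (0 : ℝ) 1)).withDensity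
    (fun x => ENNReal.ofReal (x ^ (α - 1) * (1 - x) ^ (β - 1) /
      (Real.Gamma α * Real.Gamma β / Real.Gamma (α + β))))

namespace BetaGammaAux

open Real Set
open scoped ENNReal

/-- The map `(z, s) ↦ (z s, (1-z) s)`. -/
noncomputable def psiMap (p : ℝ × ℝ) : ℝ × ℝ := (p.1 * p.2, (1 - p.1) * p.2)

lemma measurable_psiMap : Measurable psiMap :=
  (measurable_fst.mul measurable_snd).prodMk
    ((measurable_const.sub measurable_fst).mul measurable_snd)

/-- The derivative of `psiMap`. -/
noncomputable def psiDeriv (p : ℝ × ℝ) : ℝ × ℝ →L[ℝ] ℝ × ℝ :=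
  LinearMap.toContinuousLinearMap (Matrix.toLin (Module.Basis.finTwoProd ℝ) (Module.Basis.finTwoProd ℝ)
    !![p.2, p.1; -p.2, 1 - p.1])

lemma hasFDerivAt_psiMap (p : ℝ × ℝ) : HasFDerivAt psiMap (psiDeriv p) p := by
  rw [psiDeriv, Matrix.toLin_finTwoProd_toContinuousLinearMap]
  convert HasFDerivAt.prodMk (𝕜 := ℝ)
    (HasFDerivAt.mul (𝕜 := ℝ) (x := p) hasFDerivAt_fst hasFDerivAt_snd)
    (HasFDerivAt.mul (𝕜 := ℝ) (x := p) ((hasFDerivAt_const (1 : ℝ) p).sub hasFDerivAt_fst) hasFDerivAt_snd)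
      using 1 <;> (try rfl)
  ext v <;> simp <;> ring

lemma det_psiDeriv (p : ℝ × ℝ) : (psiDeriv p).det = p.2 := by
  simp only [psiDeriv, LinearMap.det_toContinuousLinearMap, LinearMap.det_toLin,
    Matrix.det_fin_two_of]
  ring

lemma psi_image : psiMap '' ((Ioo (0:ℝ) 1) ×ˢ (Ioi (0:ℝ))) = (Ioi (0:ℝ)) ×ˢ (Ioi (0:ℝ)) := by
  ext ⟨u, v⟩
  simp only [Set.mem_image, Set.mem_prod, Set.mem_Ioo, Set.mem_Ioi, Prod.exists, psiMap,
    Prod.mk.injEq]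
  constructor
  · rintro ⟨z, s, ⟨⟨hz0, hz1⟩, hs⟩, h1, h2⟩
    constructor
    · rw [← h1]; exact mul_pos hz0 hs
    · rw [← h2]; exact mul_pos (by linarith) hs
  · rintro ⟨hu, hv⟩
    have huv : (0:ℝ) < u + v := by linarith
    refine ⟨u / (u + v), u + v, ⟨⟨by positivity, ?_⟩, huv⟩, ?_, ?_⟩
    · rw [div_lt_one huv]; linarith
    · field_simp
    · field_simp; ring

lemma psi_injOn : Set.InjOn psiMap ((Ioo (0:ℝ) 1) ×ˢ (Ioi (0:ℝ))) := by
  rintro p hp q hq h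
  have h1 : p.1 * p.2 = q.1 * q.2 := congrArg Prod.fst h
  have h2 : (1 - p.1) * p.2 = (1 - q.1) * q.2 := congrArg Prod.snd h
  have hs : p.2 = q.2 := by nlinarith [h1, h2]
  have hp2 : (0:ℝ) < p.2 := hp.2
  have hz : p.1 = q.1 := by
    have := h1
    rw [hs] at this
    have hq2 : q.2 ≠ 0 := by rw [← hs]; exact hp2.ne'
    exact mul_right_cancel₀ hq2 this
  exact Prod.ext hz hs

lemma gammaScale_eq {α c : ℝ} (hα : 0 < α) (hc : 0 < c) :
    gammaScaleMeasure α c = ProbabilityTheory.gammaMeasure α c⁻¹ := by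
  rw [gammaScaleMeasure, ProbabilityTheory.gammaMeasure,
    ← withDensity_indicator measurableSet_Ioi]
  refine withDensity_congr_ae ?_
  filter_upwards [compl_mem_ae_iff.mpr (measure_singleton (0:ℝ))] with x hx
  have hx0 : x ≠ 0 := hx
  rcases hx0.lt_or_gt with h | h
  · rw [Set.indicator_of_notMem (by simpa using h.not_gt : x ∉ Set.Ioi (0:ℝ)),
      ProbabilityTheory.gammaPDF_of_neg h]
  · rw [Set.indicator_of_mem (Set.mem_Ioi.mpr h), ProbabilityTheory.gammaPDF_of_nonneg h.le]
    congr 1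
    rw [Real.inv_rpow hc.le]
    have hcα : (0:ℝ) < c ^ α := Real.rpow_pos_of_pos hc α
    have hΓ : (0:ℝ) < Real.Gamma α := Real.Gamma_pos_of_pos hα
    have hexp : -x / c = -(c⁻¹ * x) := by field_simp
    rw [hexp]
    field_simp

lemma isProb_gammaScale {α c : ℝ} (hα : 0 < α) (hc : 0 < c) :
    IsProbabilityMeasure (gammaScaleMeasure α c) := by
  rw [gammaScale_eq hα hc]
  exact ProbabilityTheory.isProbabilityMeasure_gammaMeasure hα (inv_pos.mpr hc)

lemma sigmaFinite_gammaScale (α c : ℝ) : SigmaFinite (gammaScaleMeasure α c) := by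
  unfold gammaScaleMeasure; infer_instance

lemma sigmaFinite_beta (α β : ℝ) : SigmaFinite (_root_.betaMeasure α β) := by
  unfold _root_.betaMeasure; infer_instance

lemma withDensity_prod_withDensity {μ ν : Measure ℝ} [SigmaFinite μ] [SigmaFinite ν]
    {f g : ℝ → ℝ≥0∞} (hf : Measurable f) (hg : Measurable g)
    (hf' : ∀ x, f x ≠ ⊤) (hg' : ∀ x, g x ≠ ⊤) :
    (μ.withDensity f).prod (ν.withDensity g) =
      (μ.prod ν).withDensity (fun z => f z.1 * g z.2) := by
  haveI : SigmaFinite (μ.withDensity f) := SigmaFinite.withDensity_of_ne_top' hf'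
  haveI : SigmaFinite (ν.withDensity g) := SigmaFinite.withDensity_of_ne_top' hg'
  refine Measure.prod_eq (μ := μ.withDensity f) (ν := ν.withDensity g) fun s t hs ht => ?_
  rw [withDensity_apply _ (hs.prod ht), ← Measure.prod_restrict,
    lintegral_prod_mul hf.aemeasurable hg.aemeasurable,
    withDensity_apply _ hs, withDensity_apply _ ht]

lemma measurable_gdens (α c : ℝ) :
    Measurable (fun x : ℝ =>
      ENNReal.ofReal (x ^ (α - 1) * Real.exp (-x / c) / (c ^ α * Real.Gamma α))) := by
  fun_prop

lemma measurable_bdens (α β : ℝ) :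
    Measurable (fun x : ℝ => ENNReal.ofReal (x ^ (α - 1) * (1 - x) ^ (β - 1) /
      (Real.Gamma α * Real.Gamma β / Real.Gamma (α + β)))) := by
  fun_prop

lemma density_identity {α β c : ℝ} (hα : 0 < α) (hβ : 0 < β) (hc : 0 < c)
    {z s : ℝ} (hz0 : 0 < z) (hz1 : z < 1) (hs : 0 < s) :
    ENNReal.ofReal |s| *
      (ENNReal.ofReal ((z * s) ^ (α - 1) * Real.exp (-(z * s) / c) /
          (c ^ α * Real.Gamma α)) *
        ENNReal.ofReal (((1 - z) * s) ^ (β - 1) * Real.exp (-((1 - z) * s) / c) /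
          (c ^ β * Real.Gamma β))) =
      ENNReal.ofReal (z ^ (α - 1) * (1 - z) ^ (β - 1) /
          (Real.Gamma α * Real.Gamma β / Real.Gamma (α + β))) *
        ENNReal.ofReal (s ^ (α + β - 1) * Real.exp (-s / c) /
          (c ^ (α + β) * Real.Gamma (α + β))) := by
  have hΓa : (0:ℝ) < Real.Gamma α := Real.Gamma_pos_of_pos hα
  have hΓb : (0:ℝ) < Real.Gamma β := Real.Gamma_pos_of_pos hβ
  have hΓab : (0:ℝ) < Real.Gamma (α + β) := Real.Gamma_pos_of_pos (by linarith)
  have hca : (0:ℝ) < c ^ α := Real.rpow_pos_of_pos hc α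
  have hcb : (0:ℝ) < c ^ β := Real.rpow_pos_of_pos hc β
  have ha : (0:ℝ) ≤ (z * s) ^ (α - 1) * Real.exp (-(z * s) / c) / (c ^ α * Real.Gamma α) := by
    positivity
  have hb : (0:ℝ) ≤ z ^ (α - 1) * (1 - z) ^ (β - 1) /
      (Real.Gamma α * Real.Gamma β / Real.Gamma (α + β)) :=
    div_nonneg (mul_nonneg (Real.rpow_nonneg hz0.le _)
      (Real.rpow_nonneg (by linarith) _)) (by positivity)
  rw [← ENNReal.ofReal_mul ha, ← ENNReal.ofReal_mul (abs_nonneg s),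
    ← ENNReal.ofReal_mul hb]
  refine congrArg ENNReal.ofReal ?_
  rw [abs_of_pos hs]
  have h1 : (z * s) ^ (α - 1) = z ^ (α - 1) * s ^ (α - 1) := Real.mul_rpow hz0.le hs.le
  have h2 : ((1 - z) * s) ^ (β - 1) = (1 - z) ^ (β - 1) * s ^ (β - 1) :=
    Real.mul_rpow (by linarith) hs.le
  have h3 : Real.exp (-s / c) = Real.exp (-(z * s) / c) * Real.exp (-((1 - z) * s) / c) := by
    rw [← Real.exp_add]
    congr 1
    field_simp
    ring
  have h4 : s ^ (α + β - 1) = s ^ (α - 1) * s ^ (β - 1) * s := by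
    rw [← Real.rpow_add hs, ← Real.rpow_add_one hs.ne']
    congr 1
    ring
  have h5 : c ^ (α + β) = c ^ α * c ^ β := Real.rpow_add hc α β
  rw [h1, h2, h3, h4, h5]
  field_simp

/-- Key change of variables: pushing `Beta(α,β) ⊗ Gamma(α+β,c)` through
`(z,s) ↦ (zs, (1-z)s)` gives `Gamma(α,c) ⊗ Gamma(β,c)`. -/
lemma map_psi {α β c : ℝ} (hα : 0 < α) (hβ : 0 < β) (hc : 0 < c) :
    Measure.map psiMap ((_root_.betaMeasure α β).prod (gammaScaleMeasure (α + β) c)) =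
      (gammaScaleMeasure α c).prod (gammaScaleMeasure β c) := by
  have hT : MeasurableSet ((Ioo (0:ℝ) 1) ×ˢ (Ioi (0:ℝ))) :=
    measurableSet_Ioo.prod measurableSet_Ioi
  rw [_root_.betaMeasure, gammaScaleMeasure, gammaScaleMeasure, gammaScaleMeasure,
    withDensity_prod_withDensity (measurable_bdens α β) (measurable_gdens (α + β) c)
      (fun x => ENNReal.ofReal_ne_top) (fun x => ENNReal.ofReal_ne_top),
    withDensity_prod_withDensity (measurable_gdens α c) (measurable_gdens β c)
      (fun x => ENNReal.ofReal_ne_top) (fun x => ENNReal.ofReal_ne_top),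
    Measure.prod_restrict, Measure.prod_restrict, ← Measure.volume_eq_prod]
  ext A hA
  rw [Measure.map_apply measurable_psiMap hA,
    withDensity_apply _ (measurable_psiMap hA), withDensity_apply _ hA,
    Measure.restrict_restrict (measurable_psiMap hA), Measure.restrict_restrict hA,
    ← setLIntegral_indicator (measurable_psiMap hA), ← setLIntegral_indicator hA,
    ← psi_image,
    lintegral_image_eq_lintegral_abs_det_fderiv_mul volume hT
      (fun q _ => (hasFDerivAt_psiMap q).hasFDerivWithinAt) psi_injOn]
  refine setLIntegral_congr_fun hT (fun q hq => ?_)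
  obtain ⟨⟨hz0, hz1⟩, hs⟩ : (q.1 ∈ Ioo (0:ℝ) 1) ∧ q.2 ∈ Ioi (0:ℝ) := hq
  by_cases hqA : psiMap q ∈ A
  · rw [Set.indicator_of_mem hqA, Set.indicator_of_mem (show q ∈ psiMap ⁻¹' A from hqA),
      det_psiDeriv]
    exact (density_identity hα hβ hc hz0 hz1 hs).symm
  · rw [Set.indicator_of_notMem hqA, Set.indicator_of_notMem
      (show q ∉ psiMap ⁻¹' A from hqA), mul_zero]

lemma isProb_beta {α β : ℝ} (hα : 0 < α) (hβ : 0 < β) :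
    IsProbabilityMeasure (_root_.betaMeasure α β) := by
  haveI := sigmaFinite_beta α β
  haveI := sigmaFinite_gammaScale (α + β) 1
  haveI h1 := isProb_gammaScale hα one_pos
  haveI h2 := isProb_gammaScale hβ one_pos
  haveI h3 := isProb_gammaScale (add_pos hα hβ) one_pos
  constructor
  have h := congrArg (fun m : Measure (ℝ × ℝ) => m Set.univ) (map_psi hα hβ one_pos)
  rw [Measure.map_apply measurable_psiMap MeasurableSet.univ, Set.preimage_univ,
    ← Set.univ_prod_univ, Measure.prod_prod, Measure.prod_prod,
    measure_univ (μ := gammaScaleMeasure (α + β) 1),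
    measure_univ (μ := gammaScaleMeasure α 1),
    measure_univ (μ := gammaScaleMeasure β 1), mul_one, one_mul] at h
  exact h

end BetaGammaAux

open BetaGammaAux

/-- If `ξ₁ ~ Gamma(α, c)`, `ξ₂ ~ Gamma(β, c)` and `Z ~ Beta(α, β)` are independent, then
`(Z(ξ₁+ξ₂), (1−Z)(ξ₁+ξ₂))` has the same joint distribution as `(ξ₁, ξ₂)`. -/
theorem beta_gamma_redistribution {Ω : Type*} [MeasureSpace Ω]
    [IsProbabilityMeasure (ℙ : Measure Ω)]
    (α β c : ℝ) (hα : 0 < α) (hβ : 0 < β) (hc : 0 < c)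
    (ξ₁ ξ₂ Z : Ω → ℝ)
    (hm₁ : Measurable ξ₁) (hm₂ : Measurable ξ₂) (hmZ : Measurable Z)
    (hindep : iIndepFun ![ξ₁, ξ₂, Z] ℙ)
    (hd₁ : Measure.map ξ₁ ℙ = gammaScaleMeasure α c)
    (hd₂ : Measure.map ξ₂ ℙ = gammaScaleMeasure β c)
    (hdZ : Measure.map Z ℙ = _root_.betaMeasure α β) :
    Measure.map (fun a => (Z a * (ξ₁ a + ξ₂ a), (1 - Z a) * (ξ₁ a + ξ₂ a))) ℙ
      = Measure.map (fun a => (ξ₁ a, ξ₂ a)) ℙ := by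
  haveI := sigmaFinite_gammaScale α c
  haveI := sigmaFinite_gammaScale β c
  haveI := sigmaFinite_gammaScale (α + β) c
  haveI := sigmaFinite_beta α β
  haveI := isProb_gammaScale hα hc
  haveI := isProb_gammaScale hβ hc
  haveI := isProb_gammaScale (add_pos hα hβ) hc
  haveI := isProb_beta hα hβ
  have hmeas_fam : ∀ i, Measurable (![ξ₁, ξ₂, Z] i) := by
    intro i
    fin_cases i <;> assumption
  have h12 : IndepFun ξ₁ ξ₂ ℙ := hindep.indepFun (show (0 : Fin 3) ≠ 1 by decide)
  have hpair : Measure.map (fun a => (ξ₁ a, ξ₂ a)) ℙ =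
      (gammaScaleMeasure α c).prod (gammaScaleMeasure β c) := by
    rw [(indepFun_iff_map_prod_eq_prod_map_map hm₁.aemeasurable hm₂.aemeasurable).mp h12,
      hd₁, hd₂]
  have hpairZ : IndepFun (fun a => (ξ₁ a, ξ₂ a)) Z ℙ :=
    hindep.indepFun_prodMk hmeas_fam 0 1 2 (by decide) (by decide)
  have hjoint : Measure.map (fun a => ((ξ₁ a, ξ₂ a), Z a)) ℙ =
      ((gammaScaleMeasure α c).prod (gammaScaleMeasure β c)).prod (_root_.betaMeasure α β) := by
    rw [(indepFun_iff_map_prod_eq_prod_map_map (hm₁.prodMk hm₂).aemeasurable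
      hmZ.aemeasurable).mp hpairZ, hpair, hdZ]
  have hsum_meas : Measurable (fun q : ℝ × ℝ => q.1 + q.2) :=
    measurable_fst.add measurable_snd
  have hTmeas : Measurable (fun p : (ℝ × ℝ) × ℝ =>
      (p.2 * (p.1.1 + p.1.2), (1 - p.2) * (p.1.1 + p.1.2))) := by fun_prop
  have hcomp : (fun a => (Z a * (ξ₁ a + ξ₂ a), (1 - Z a) * (ξ₁ a + ξ₂ a))) =
      (fun p : (ℝ × ℝ) × ℝ => (p.2 * (p.1.1 + p.1.2), (1 - p.2) * (p.1.1 + p.1.2))) ∘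
        (fun a => ((ξ₁ a, ξ₂ a), Z a)) := rfl
  rw [hcomp, ← Measure.map_map hTmeas ((hm₁.prodMk hm₂).prodMk hmZ), hjoint, hpair]
  -- goal: map T ((gα × gβ) × ν) = gα × gβ
  have hkey := map_psi hα hβ hc
  have hsum : Measure.map (fun q : ℝ × ℝ => q.1 + q.2)
      ((gammaScaleMeasure α c).prod (gammaScaleMeasure β c)) =
      gammaScaleMeasure (α + β) c := by
    rw [← hkey, Measure.map_map hsum_meas measurable_psiMap]
    have hcomp2 : (fun q : ℝ × ℝ => q.1 + q.2) ∘ psiMap = Prod.snd := by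
      funext q
      simp only [Function.comp_apply, psiMap]
      ring
    rw [hcomp2, Measure.map_snd_prod, measure_univ, one_smul]
  have hfact : (fun p : (ℝ × ℝ) × ℝ =>
      (p.2 * (p.1.1 + p.1.2), (1 - p.2) * (p.1.1 + p.1.2))) =
      psiMap ∘ (Prod.swap ∘ Prod.map (fun q : ℝ × ℝ => q.1 + q.2) (id : ℝ → ℝ)) := rfl
  have hstep : Measure.map (Prod.swap ∘ Prod.map (fun q : ℝ × ℝ => q.1 + q.2) (id : ℝ → ℝ))
      (((gammaScaleMeasure α c).prod (gammaScaleMeasure β c)).prod (_root_.betaMeasure α β)) =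
      (_root_.betaMeasure α β).prod (gammaScaleMeasure (α + β) c) := by
    rw [← Measure.map_map measurable_swap (hsum_meas.prodMap measurable_id),
      ← Measure.map_prod_map _ _ hsum_meas measurable_id, Measure.map_id, hsum,
      Measure.prod_swap]
  rw [hfact, ← Measure.map_map measurable_psiMap
    (measurable_swap.comp (hsum_meas.prodMap measurable_id)), hstep, hkey]
end

section
/- Let a, b > 0 be real numbers, let n, m be natural numbers, and let x, y ≥ 0 be real numbers. Then ∫₀¹ (1/B(a,b)) · p^{a−1}(1−p)^{b−1} · (p(x+y))^n · ((1−p)(x+y))^m / (Γ(n+a)·Γ(m+b)) dp = Σ_{k=0}^{n+m} C(n+m, k) · (B(k+a, n+m−k+b)/B(a,b)) · x^k y^{n+m−k} / (Γ(k+a)·Γ(n+m−k+b)), where C(n+m,k) is the binomial coefficient. (This is the single-edge duality identity: the expectation of the duality function after a Beta(a,b) energy redistribution equals the beta-binomial average of duality functions over particle redistributions.) -/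
open Real

/-- The Beta function `B(a, b) = Γ(a)Γ(b)/Γ(a+b)`. -/
noncomputable def betaFn (a b : ℝ) : ℝ := Real.Gamma a * Real.Gamma b / Real.Gamma (a + b)

lemma betaFn_eq (u v : ℝ) (hu : 0 < u) (hv : 0 < v) :
    ∫ p in Set.Ioo (0 : ℝ) 1, p ^ (u - 1) * (1 - p) ^ (v - 1) = betaFn u v := by
  have key : Complex.Gamma u * Complex.Gamma v
      = Complex.Gamma (u + v) * Complex.betaIntegral u v :=
    Complex.Gamma_mul_Gamma_eq_betaIntegral (by simpa using hu) (by simpa using hv)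
  have hcast : ((∫ p in Set.Ioo (0 : ℝ) 1, p ^ (u - 1) * (1 - p) ^ (v - 1) : ℝ) : ℂ)
      = Complex.betaIntegral u v := by
    rw [Complex.betaIntegral, intervalIntegral.integral_of_le zero_le_one,
      ← MeasureTheory.integral_Ioc_eq_integral_Ioo]
    have h0 : (↑(∫ t in Set.Ioc (0:ℝ) 1, t ^ (u-1) * (1-t)^(v-1)) : ℂ)
        = ∫ t in Set.Ioc (0:ℝ) 1, ((t ^ (u-1) * (1-t)^(v-1) : ℝ) : ℂ) :=
      (integral_ofReal (𝕜 := ℂ)).symm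
    rw [h0]
    refine MeasureTheory.setIntegral_congr_fun measurableSet_Ioc fun p hp => ?_
    have hp0 : (0 : ℝ) ≤ p := le_of_lt hp.1
    have hp1 : (0 : ℝ) ≤ 1 - p := by linarith [hp.2]
    rw [Complex.ofReal_mul, Complex.ofReal_cpow hp0, Complex.ofReal_cpow hp1]
    push_cast
    ring
  have hne : Complex.Gamma (u + v) ≠ 0 := by
    rw [show ((u : ℂ) + v) = ((u + v : ℝ) : ℂ) by push_cast; ring, Complex.Gamma_ofReal]
    exact_mod_cast (Real.Gamma_pos_of_pos (by linarith)).ne'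
  have : Complex.betaIntegral u v = Complex.Gamma u * Complex.Gamma v / Complex.Gamma (u + v) := by
    field_simp [key]
    rw [key]; ring
  rw [this] at hcast
  rw [show ((u : ℂ) + v) = ((u + v : ℝ) : ℂ) by push_cast; ring] at hcast
  rw [Complex.Gamma_ofReal, Complex.Gamma_ofReal, Complex.Gamma_ofReal] at hcast
  have := hcast
  rw [show ((Real.Gamma u : ℂ) * Real.Gamma v / Real.Gamma (u + v))
      = ((Real.Gamma u * Real.Gamma v / Real.Gamma (u + v) : ℝ) : ℂ) by push_cast; ring] at this
  exact_mod_cast this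

/-- The single-edge duality identity: the expectation of the duality function after a
`Beta(a,b)` energy redistribution equals the beta-binomial average of duality functions
over particle redistributions. -/
theorem single_edge_duality (a b : ℝ) (ha : 0 < a) (hb : 0 < b) (n m : ℕ)
    (x y : ℝ) (hx : 0 ≤ x) (hy : 0 ≤ y) :
    ∫ p in Set.Ioo (0 : ℝ) 1,
        (1 / betaFn a b) * p ^ (a - 1) * (1 - p) ^ (b - 1) *
          ((p * (x + y)) ^ n * ((1 - p) * (x + y)) ^ m /
            (Real.Gamma (n + a) * Real.Gamma (m + b)))
      = ∑ k ∈ Finset.range (n + m + 1),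
          ((n + m).choose k : ℝ) * (betaFn (k + a) ((n + m - k : ℕ) + b) / betaFn a b) *
            (x ^ k * y ^ (n + m - k) /
              (Real.Gamma (k + a) * Real.Gamma ((n + m - k : ℕ) + b))) := by
  have hGa := Real.Gamma_pos_of_pos ha
  have hGb := Real.Gamma_pos_of_pos hb
  have hGna := Real.Gamma_pos_of_pos (by positivity : (0:ℝ) < n + a)
  have hGmb := Real.Gamma_pos_of_pos (by positivity : (0:ℝ) < m + b)
  have hGab := Real.Gamma_pos_of_pos (by positivity : (0:ℝ) < a + b)
  have hGs : (0:ℝ) < Real.Gamma ((n + m : ℕ) + a + b) :=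
    Real.Gamma_pos_of_pos (by positivity)
  have hB : (0:ℝ) < betaFn a b := by unfold betaFn; positivity
  set C : ℝ := (x + y) ^ (n + m) / (betaFn a b * Real.Gamma (n + a) * Real.Gamma (m + b))
  have hstep : ∫ p in Set.Ioo (0 : ℝ) 1,
        (1 / betaFn a b) * p ^ (a - 1) * (1 - p) ^ (b - 1) *
          ((p * (x + y)) ^ n * ((1 - p) * (x + y)) ^ m /
            (Real.Gamma (n + a) * Real.Gamma (m + b)))
      = C * ∫ p in Set.Ioo (0 : ℝ) 1, p ^ ((n + a) - 1) * (1 - p) ^ ((m + b) - 1) := by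
    rw [← MeasureTheory.integral_const_mul]
    refine MeasureTheory.setIntegral_congr_fun measurableSet_Ioo fun p hp => ?_
    have hp0 : (0:ℝ) < p := hp.1
    have hp1 : (0:ℝ) < 1 - p := by linarith [hp.2]
    have e1 : p ^ ((n:ℝ) + a - 1) = p ^ n * p ^ (a - 1) := by
      rw [show (n:ℝ) + a - 1 = (n:ℝ) + (a - 1) by ring, Real.rpow_add hp0,
        Real.rpow_natCast]
    have e2 : (1 - p) ^ ((m:ℝ) + b - 1) = (1 - p) ^ m * (1 - p) ^ (b - 1) := by
      rw [show (m:ℝ) + b - 1 = (m:ℝ) + (b - 1) by ring, Real.rpow_add hp1,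
        Real.rpow_natCast]
    simp only [C, e1, e2, mul_pow]
    field_simp
    ring
  rw [hstep, betaFn_eq (n + a) (m + b) (by positivity) (by positivity)]
  have hbeq : betaFn (n + a) (m + b)
      = Real.Gamma (n + a) * Real.Gamma (m + b) / Real.Gamma ((n + m : ℕ) + a + b) := by
    unfold betaFn
    congr 1
    push_cast
    ring_nf
  rw [hbeq]
  have hsum : ((x + y) ^ (n + m) : ℝ)
      = ∑ k ∈ Finset.range (n + m + 1), x ^ k * y ^ (n + m - k) * ((n + m).choose k : ℝ) := by
    exact_mod_cast add_pow x y (n + m)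
  have lhs_eq : C * (Real.Gamma (n + a) * Real.Gamma (m + b) / Real.Gamma ((n + m : ℕ) + a + b))
      = (x + y) ^ (n + m) / (betaFn a b * Real.Gamma ((n + m : ℕ) + a + b)) := by
    simp only [C]
    field_simp
  rw [lhs_eq, hsum, Finset.sum_div]
  refine Finset.sum_congr rfl fun k hk => ?_
  have hkle : k ≤ n + m := Nat.lt_succ_iff.mp (Finset.mem_range.mp hk)
  have hGk := Real.Gamma_pos_of_pos (by positivity : (0:ℝ) < k + a)
  have hGnk := Real.Gamma_pos_of_pos (by positivity : (0:ℝ) < ((n + m - k : ℕ) : ℝ) + b)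
  have hbk : betaFn (k + a) ((n + m - k : ℕ) + b)
      = Real.Gamma (k + a) * Real.Gamma ((n + m - k : ℕ) + b)
        / Real.Gamma ((n + m : ℕ) + a + b) := by
    unfold betaFn
    congr 1
    have : ((n + m - k : ℕ) : ℝ) = (n + m : ℕ) - k := by
      push_cast [Nat.cast_sub hkle]; ring
    rw [this]
    ring_nf
  have hcast : ((n + m - k : ℕ) : ℝ) = (n : ℝ) + m - k := by
    push_cast [Nat.cast_sub hkle]; ring
  rw [hbk]
  rw [hcast] at hGnk ⊢
  field_simp
end

section
/- Let K ≥ 1 be an integer and let κ : [0,1] → {p ∈ ℝ^K : p_i ≥ 0 for all i, Σ_{i=1}^K p_i = 1} be continuous. On a probability space, for each integer L ≥ 1 let (ω^{(L)}_v)_{v=0,…,L} be random variables with values in {1, …, K} such that the whole family (over all L and v) is independent and ℙ(ω^{(L)}_v = i) = κ_i(v/L). Define ψ^{(L)}(m) = (ω^{(L)}_{m−1} + ω^{(L)}_m)/(ω^{(L)}_{m−1} · ω^{(L)}_m) for 1 ≤ m ≤ L, and 𝒜^{(L)}(x) = (Σ_{m=1}^{⌊xL⌋} ψ^{(L)}(m))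 / (Σ_{m=1}^{L} ψ^{(L)}(m)) for x ∈ [0,1]. Then for every x ∈ [0,1], almost surely lim_{L→∞} 𝒜^{(L)}(x) = (Σ_{i=1}^K (1/i) ∫₀^x κ_i(y) dy) / (Σ_{i=1}^K (1/i) ∫₀^1 κ_i(y) dy). -/
open MeasureTheory ProbabilityTheory Filter Topology
open scoped ENNReal


section Aux
variable {Ω : Type*} [MeasureSpace Ω] [IsProbabilityMeasure (ℙ : Measure Ω)]

lemma integrable_of_abs_le {f : Ω → ℝ} (hf : Measurable f) {C : ℝ}
    (h : ∀ a, |f a| ≤ C) : Integrable f ℙ := by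
  refine (integrable_const C).mono' hf.aestronglyMeasurable ?_
  exact Eventually.of_forall fun a => by simpa [Real.norm_eq_abs] using h a

lemma iIndepFun_comp_of_injective {ι ι' β : Type*} [Nonempty ι'] [mβ : MeasurableSpace β]
    {f : ι → Ω → β} (h : iIndepFun f ℙ)
    (g : ι' → ι) (hg : Function.Injective g) :
    iIndepFun (fun i => f (g i)) ℙ := by
  classical
  rw [iIndepFun_iff_measure_inter_preimage_eq_mul] at h ⊢
  intro S sets hsets
  set r := Function.invFun g with hrdef
  have hrg : ∀ v, r (g v) = v := fun v => Function.leftInverse_invFun hg v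
  have key := h (S.image g) (sets := fun i => sets (r i)) ?_
  · have hset : (⋂ i ∈ S.image g, f i ⁻¹' sets (r i)) = ⋂ v ∈ S, f (g v) ⁻¹' sets v := by
      ext a
      simp only [Set.mem_iInter, Finset.mem_image]
      constructor
      · intro H v hv
        have := H (g v) ⟨v, hv, rfl⟩
        rwa [hrg] at this
      · rintro H i ⟨v, hv, rfl⟩
        rw [hrg]; exact H v hv
    rw [hset] at key
    rw [key, Finset.prod_image (fun a _ b _ hab => hg hab)]
    exact Finset.prod_congr rfl fun v hv => by rw [hrg]
  · intro i hi
    rcases Finset.mem_image.mp hi with ⟨v, hv, rfl⟩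
    simpa [hrg] using hsets v hv

lemma sum_psi (Y : ℕ → ℝ) (n : ℕ) :
    ∑ m ∈ Finset.Icc 1 n, (Y (m - 1) + Y m)
      = 2 * (∑ v ∈ Finset.range (n + 1), Y v) - Y 0 - Y n := by
  induction n with
  | zero => simp; ring
  | succ n ih =>
      rw [Finset.sum_Icc_succ_top (Nat.one_le_iff_ne_zero.mpr (Nat.succ_ne_zero n)), ih,
        Finset.sum_range_succ (f := Y) (n := n + 1)]
      simp only [Nat.add_sub_cancel]
      ring
end Aux

section Mom
variable {Ω : Type*} [MeasureSpace Ω] [IsProbabilityMeasure (ℙ : Measure Ω)]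

lemma moment_bounds (Z : ℕ → Ω → ℝ) (hm : ∀ v, Measurable (Z v))
    (hi : iIndepFun Z ℙ) (F : Finset ℕ)
    (hb : ∀ v ∈ F, ∀ a, |Z v a| ≤ 1) (hc : ∀ v ∈ F, ∫ a, Z v a ∂ℙ = 0) :
    (∫ a, (∑ v ∈ F, Z v a) ^ 2 ∂ℙ ≤ (F.card : ℝ)) ∧
    (∫ a, (∑ v ∈ F, Z v a) ^ 4 ∂ℙ ≤ 3 * (F.card : ℝ) ^ 2) := by
  classical
  induction F using Finset.induction_on with
  | empty => simp
  | @insert w F hw ih =>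
      have hbF : ∀ v ∈ F, ∀ a, |Z v a| ≤ 1 := fun v hv => hb v (Finset.mem_insert_of_mem hv)
      have hcF : ∀ v ∈ F, ∫ a, Z v a ∂ℙ = 0 := fun v hv => hc v (Finset.mem_insert_of_mem hv)
      obtain ⟨ih2, ih4⟩ := ih hbF hcF
      set S : Ω → ℝ := fun a => ∑ v ∈ F, Z v a with hSdef
      set n : ℝ := (F.card : ℝ) with hndef
      have hn0 : 0 ≤ n := Nat.cast_nonneg _
      have hSmeas : Measurable S := Finset.measurable_sum F fun v _ => hm v
      have hSbd : ∀ a, |S a| ≤ n := by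
        intro a
        calc |S a| ≤ ∑ v ∈ F, |Z v a| := Finset.abs_sum_le_sum_abs _ _
        _ ≤ ∑ _v ∈ F, (1 : ℝ) := Finset.sum_le_sum fun v hv => hbF v hv a
        _ = n := by simp [hndef]
      have hZw : ∀ a, |Z w a| ≤ 1 := hb w (Finset.mem_insert_self w F)
      have hZint : Integrable (Z w) ℙ := integrable_of_abs_le (hm w) hZw
      have hES : ∫ a, S a ∂ℙ = 0 := by
        rw [hSdef]
        rw [integral_finset_sum F fun v hv => integrable_of_abs_le (hm v) (hbF v hv)]
        exact Finset.sum_eq_zero hcF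
      have hEZ : ∫ a, Z w a ∂ℙ = 0 := hc w (Finset.mem_insert_self w F)
      have hInd : IndepFun S (Z w) ℙ := by
        have hfun : (∑ j ∈ F, Z j) = S := by funext a; simp [hSdef]
        exact hfun ▸ hi.indepFun_finset_sum_of_notMem hm hw
      have hintmul : ∀ k j : ℕ, Integrable (fun a => S a ^ k * Z w a ^ j) ℙ := by
        intro k j
        refine integrable_of_abs_le ((hSmeas.pow_const k).mul ((hm w).pow_const j)) (C := n ^ k) ?_
        intro a
        rw [abs_mul, abs_pow, abs_pow]
        have h1 : |S a| ^ k ≤ n ^ k := pow_le_pow_left₀ (abs_nonneg _) (hSbd a) k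
        have h2 : |Z w a| ^ j ≤ 1 := pow_le_one₀ (abs_nonneg _) (hZw a)
        calc |S a| ^ k * |Z w a| ^ j ≤ n ^ k * 1 :=
              mul_le_mul h1 h2 (pow_nonneg (abs_nonneg _) j) (pow_nonneg hn0 k)
        _ = n ^ k := mul_one _
      have hintS : ∀ k : ℕ, Integrable (fun a => S a ^ k) ℙ := by
        intro k
        refine integrable_of_abs_le (hSmeas.pow_const k) (C := n ^ k) ?_
        intro a; rw [abs_pow]; exact pow_le_pow_left₀ (abs_nonneg _) (hSbd a) k
      have hintZ : ∀ j : ℕ, Integrable (fun a => Z w a ^ j) ℙ := by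
        intro j
        refine integrable_of_abs_le ((hm w).pow_const j) (C := 1) ?_
        intro a; rw [abs_pow]; exact pow_le_one₀ (abs_nonneg _) (hZw a)
      have key : ∀ k j : ℕ,
          ∫ a, S a ^ k * Z w a ^ j ∂ℙ = (∫ a, S a ^ k ∂ℙ) * ∫ a, Z w a ^ j ∂ℙ := by
        intro k j
        have hIkj : IndepFun (fun a => S a ^ k) (fun a => Z w a ^ j) ℙ :=
          hInd.comp (measurable_id.pow_const k) (measurable_id.pow_const j)
        exact hIkj.integral_fun_mul_eq_mul_integral (hintS k).aestronglyMeasurable (hintZ j).aestronglyMeasurable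
      have hS1 : (fun a => S a ^ 1) = S := by funext a; rw [pow_one]
      have hZ1 : (fun a => Z w a ^ 1) = Z w := by funext a; rw [pow_one]
      have hEZ2 : ∫ a, Z w a ^ 2 ∂ℙ ≤ 1 := by
        calc ∫ a, Z w a ^ 2 ∂ℙ ≤ ∫ _a, (1 : ℝ) ∂ℙ := by
              refine integral_mono (hintZ 2) (integrable_const 1) fun a => ?_
              calc Z w a ^ 2 = |Z w a| ^ 2 := (sq_abs _).symm
              _ ≤ 1 := pow_le_one₀ (abs_nonneg _) (hZw a)
        _ = 1 := by simp
      have hEZ4 : ∫ a, Z w a ^ 4 ∂ℙ ≤ 1 := by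
        calc ∫ a, Z w a ^ 4 ∂ℙ ≤ ∫ _a, (1 : ℝ) ∂ℙ := by
              refine integral_mono (hintZ 4) (integrable_const 1) fun a => ?_
              calc Z w a ^ 4 = |Z w a| ^ 4 := by rw [pow_abs, abs_of_nonneg (by positivity)]
              _ ≤ 1 := pow_le_one₀ (abs_nonneg _) (hZw a)
        _ = 1 := by simp
      have hEZ2nn : 0 ≤ ∫ a, Z w a ^ 2 ∂ℙ := integral_nonneg fun a => sq_nonneg _
      have hES2nn : 0 ≤ ∫ a, S a ^ 2 ∂ℙ := integral_nonneg fun a => sq_nonneg _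
      have hsum : ∀ a, ∑ v ∈ insert w F, Z v a = Z w a + S a := fun a =>
        Finset.sum_insert hw
      have hcard : ((insert w F).card : ℝ) = n + 1 := by
        rw [Finset.card_insert_of_notMem hw]; push_cast [hndef]; ring
      constructor
      · have hexp : (fun a => (∑ v ∈ insert w F, Z v a) ^ 2)
            = fun a => S a ^ 2 + ((2 : ℝ) * (S a ^ 1 * Z w a ^ 1) + Z w a ^ 2) := by
          funext a; rw [hsum a]; ring
        have i1 : Integrable (fun a => (2 : ℝ) * (S a ^ 1 * Z w a ^ 1) + Z w a ^ 2) ℙ :=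
          ((hintmul 1 1).const_mul 2).add (hintZ 2)
        rw [hexp, integral_add (hintS 2) i1,
          integral_add ((hintmul 1 1).const_mul 2) (hintZ 2),
          integral_const_mul, key 1 1, hcard]
        rw [hS1, hZ1, hES, hEZ]
        linarith
      · have hexp : (fun a => (∑ v ∈ insert w F, Z v a) ^ 4)
            = fun a => S a ^ 4 + ((4 : ℝ) * (S a ^ 3 * Z w a ^ 1)
              + ((6 : ℝ) * (S a ^ 2 * Z w a ^ 2)
              + ((4 : ℝ) * (S a ^ 1 * Z w a ^ 3) + Z w a ^ 4))) := by
          funext a; rw [hsum a]; ring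
        have i4 : Integrable (fun a => (4 : ℝ) * (S a ^ 1 * Z w a ^ 3) + Z w a ^ 4) ℙ :=
          ((hintmul 1 3).const_mul 4).add (hintZ 4)
        have i3 : Integrable (fun a => (6 : ℝ) * (S a ^ 2 * Z w a ^ 2)
            + ((4 : ℝ) * (S a ^ 1 * Z w a ^ 3) + Z w a ^ 4)) ℙ :=
          ((hintmul 2 2).const_mul 6).add i4
        have i2 : Integrable (fun a => (4 : ℝ) * (S a ^ 3 * Z w a ^ 1)
            + ((6 : ℝ) * (S a ^ 2 * Z w a ^ 2)
            + ((4 : ℝ) * (S a ^ 1 * Z w a ^ 3) + Z w a ^ 4))) ℙ :=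
          ((hintmul 3 1).const_mul 4).add i3
        rw [hexp, integral_add (hintS 4) i2,
          integral_add ((hintmul 3 1).const_mul 4) i3,
          integral_add ((hintmul 2 2).const_mul 6) i4,
          integral_add ((hintmul 1 3).const_mul 4) (hintZ 4),
          integral_const_mul, integral_const_mul, integral_const_mul,
          key 3 1, key 2 2, key 1 3, hcard]
        rw [hZ1, hS1, hEZ, hES]
        have h22 : (∫ a, S a ^ 2 ∂ℙ) * ∫ a, Z w a ^ 2 ∂ℙ ≤ n * 1 :=
          mul_le_mul ih2 hEZ2 hEZ2nn hn0
        nlinarith [hEZ4]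

end Mom

lemma riemann_tendsto (g : ℝ → ℝ) (hg : ContinuousOn g (Set.Icc 0 1))
    (c : ℝ) (hc : c ∈ Set.Icc (0 : ℝ) 1) :
    Tendsto (fun L : ℕ => (∑ v ∈ Finset.range (⌊c * L⌋₊ + 1), g (v / L)) / L)
      atTop (𝓝 (∫ y in (0 : ℝ)..c, g y)) := by
  obtain ⟨M, hM⟩ := isCompact_Icc.exists_bound_of_continuousOn hg
  have hM0 : 0 ≤ M := le_trans (norm_nonneg _) (hM 0 ⟨le_refl _, zero_le_one⟩)
  have huc := isCompact_Icc.uniformContinuousOn_of_continuous hg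
  rw [Metric.uniformContinuousOn_iff] at huc
  have hintegr : ∀ u v : ℝ, u ∈ Set.Icc (0:ℝ) 1 → v ∈ Set.Icc (0:ℝ) 1 →
      IntervalIntegrable g MeasureTheory.volume u v := by
    intro u v hu hv
    refine (hg.mono ?_).intervalIntegrable
    have h01 : Set.uIcc (0 : ℝ) 1 = Set.Icc 0 1 := Set.uIcc_of_le zero_le_one
    calc Set.uIcc u v ⊆ Set.uIcc 0 1 :=
          Set.uIcc_subset_uIcc (by rw [h01]; exact hu) (by rw [h01]; exact hv)
    _ = Set.Icc 0 1 := by rw [h01]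
  rw [Metric.tendsto_atTop]
  intro ε hε
  obtain ⟨δ, hδ0, hδ⟩ := huc (ε / 4) (by linarith)
  refine ⟨max (⌈4 * M / ε⌉₊ + 1) (⌈1 / δ⌉₊ + 1), fun L hL => ?_⟩
  have hL1 : 1 ≤ L := le_trans (Nat.succ_le_succ (Nat.zero_le _)) (le_trans (le_max_left _ _) hL)
  have hLpos : (0 : ℝ) < L := by exact_mod_cast hL1
  have hLM : 4 * M / ε < L := by
    have h1 : (⌈4 * M / ε⌉₊ : ℝ) + 1 ≤ L := by
      exact_mod_cast le_trans (le_max_left _ _) hL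
    exact lt_of_le_of_lt (Nat.le_ceil _) (by linarith)
  have hML : M / L < ε / 4 := by
    rw [div_lt_iff₀ hLpos]
    rw [div_lt_iff₀ hε] at hLM
    linarith
  have hLδ : 1 / (L : ℝ) < δ := by
    have h1 : (⌈1 / δ⌉₊ : ℝ) + 1 ≤ L := by
      exact_mod_cast le_trans (le_max_right _ _) hL
    have h2 : 1 / δ < L := lt_of_le_of_lt (Nat.le_ceil _) (by linarith)
    have h3 : 1 < L * δ := (div_lt_iff₀ hδ0).mp h2
    rw [div_lt_iff₀ hLpos]
    linarith
  set n := ⌊c * L⌋₊ with hndef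
  set a : ℕ → ℝ := fun k => (k : ℝ) / L with hadef
  have hnle : (n : ℝ) ≤ c * L := Nat.floor_le (mul_nonneg hc.1 hLpos.le)
  have hnL : n ≤ L := by
    have h1 : c * L ≤ L := by nlinarith [hc.2]
    calc n = ⌊c * (L : ℝ)⌋₊ := rfl
    _ ≤ ⌊((L : ℕ) : ℝ)⌋₊ := Nat.floor_le_floor h1
    _ = L := Nat.floor_natCast L
  have haIcc : ∀ k, k ≤ L → a k ∈ Set.Icc (0 : ℝ) 1 := by
    intro k hk
    constructor
    · positivity
    · rw [div_le_one hLpos]; exact_mod_cast hk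
  have ha0 : a 0 = 0 := by simp [hadef]
  have hanc : a n ≤ c := by
    rw [hadef]; exact (div_le_iff₀ hLpos).mpr hnle
  have hcan : c - a n ≤ 1 / L := by
    have h1 : c * L < (n : ℝ) + 1 := Nat.lt_floor_add_one _
    rw [hadef]
    rw [sub_le_iff_le_add, ← add_div, le_div_iff₀ hLpos]
    linarith
  have hmono : ∀ k, a k ≤ a (k + 1) := by
    intro k
    show (k : ℝ) / L ≤ ((k + 1 : ℕ) : ℝ) / L
    gcongr
    exact_mod_cast Nat.le_succ k
  have hlen : ∀ k : ℕ, a (k + 1) - a k = 1 / L := by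
    intro k
    show ((k + 1 : ℕ) : ℝ) / L - (k : ℝ) / L = 1 / L
    push_cast
    field_simp
    ring
  have hsum1 : ∑ k ∈ Finset.range n, ∫ y in a k..a (k + 1), g y
      = ∫ y in (a 0)..(a n), g y :=
    intervalIntegral.sum_integral_adjacent_intervals fun k hk =>
      hintegr _ _ (haIcc k (by omega)) (haIcc (k + 1) (by omega))
  have hsplit : ∫ y in (0 : ℝ)..c, g y
      = (∑ k ∈ Finset.range n, ∫ y in a k..a (k + 1), g y) + ∫ y in a n..c, g y := by
    rw [hsum1, ha0]
    exact (intervalIntegral.integral_add_adjacent_intervals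
      (hintegr _ _ ⟨le_refl _, zero_le_one⟩ (haIcc n hnL))
      (hintegr _ _ (haIcc n hnL) hc)).symm
  have hterm : ∀ k ∈ Finset.range n,
      |g (a k) / L - ∫ y in a k..a (k + 1), g y| ≤ ε / 4 * (1 / L) := by
    intro k hk
    have hkn : k < n := Finset.mem_range.mp hk
    have hk1L : k + 1 ≤ L := by omega
    have hakIcc : a k ∈ Set.Icc (0 : ℝ) 1 := haIcc k (by omega)
    have hak1Icc : a (k + 1) ∈ Set.Icc (0 : ℝ) 1 := haIcc (k + 1) hk1L
    have e2 : g (a k) / L - ∫ y in a k..a (k + 1), g y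
        = ∫ y in a k..a (k + 1), (g (a k) - g y) := by
      rw [intervalIntegral.integral_sub (intervalIntegrable_const) (hintegr _ _ hakIcc hak1Icc),
        intervalIntegral.integral_const, hlen k, smul_eq_mul]
      ring
    rw [e2]
    have hbd : ∀ y ∈ Set.uIoc (a k) (a (k + 1)), ‖g (a k) - g y‖ ≤ ε / 4 := by
      intro y hy
      rw [Set.uIoc_of_le (hmono k)] at hy
      have hyIcc : y ∈ Set.Icc (0 : ℝ) 1 :=
        ⟨le_trans hakIcc.1 hy.1.le, le_trans hy.2 hak1Icc.2⟩
      have hyk : y - a k ≤ 1 / L := by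
        have := hlen k
        linarith [hy.2]
      have hdist : dist (a k) y < δ := by
        rw [Real.dist_eq, abs_of_nonpos (by linarith [hy.1])]
        linarith
      exact (hδ (a k) hakIcc y hyIcc hdist).le
    have hnorm := intervalIntegral.norm_integral_le_of_norm_le_const hbd
    rw [Real.norm_eq_abs] at hnorm
    calc |∫ y in a k..a (k + 1), (g (a k) - g y)| ≤ ε / 4 * |a (k + 1) - a k| := hnorm
    _ = ε / 4 * (1 / L) := by rw [hlen k, abs_of_nonneg (by positivity)]
  have hedge : |g (a n) / L - ∫ y in a n..c, g y| ≤ M / L + M / L := by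
    have h1 : |g (a n) / L| ≤ M / L := by
      rw [abs_div, abs_of_nonneg hLpos.le]
      gcongr
      exact (Real.norm_eq_abs _) ▸ hM (a n) (haIcc n hnL)
    have h2 : |∫ y in a n..c, g y| ≤ M / L := by
      have hbd : ∀ y ∈ Set.uIoc (a n) c, ‖g y‖ ≤ M := by
        intro y hy
        rw [Set.uIoc_of_le hanc] at hy
        exact hM y ⟨le_trans (haIcc n hnL).1 hy.1.le, le_trans hy.2 hc.2⟩
      have hnorm := intervalIntegral.norm_integral_le_of_norm_le_const hbd
      rw [Real.norm_eq_abs] at hnorm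
      refine hnorm.trans ?_
      rw [abs_of_nonneg (by linarith)]
      calc M * (c - a n) ≤ M * (1 / L) := by gcongr
      _ = M / L := by ring
    calc |g (a n) / L - ∫ y in a n..c, g y| ≤ |g (a n) / L| + |∫ y in a n..c, g y| := by
          rw [sub_eq_add_neg]
          exact (abs_add_le _ _).trans (by rw [abs_neg])
    _ ≤ M / L + M / L := add_le_add h1 h2
  have key : (∑ v ∈ Finset.range (n + 1), g (a v)) / L - ∫ y in (0 : ℝ)..c, g y
      = (∑ k ∈ Finset.range n, (g (a k) / L - ∫ y in a k..a (k + 1), g y))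
        + (g (a n) / L - ∫ y in a n..c, g y) := by
    rw [hsplit, Finset.sum_range_succ, add_div, Finset.sum_div, Finset.sum_sub_distrib]
    ring
  have hsumbd : |∑ k ∈ Finset.range n, (g (a k) / L - ∫ y in a k..a (k + 1), g y)|
      ≤ (n : ℝ) * (ε / 4 * (1 / L)) := by
    refine (Finset.abs_sum_le_sum_abs _ _).trans ?_
    have := Finset.sum_le_card_nsmul (Finset.range n) _ (ε / 4 * (1 / L)) hterm
    simpa [Finset.card_range, nsmul_eq_mul] using this
  have hn4 : (n : ℝ) * (ε / 4 * (1 / L)) ≤ ε / 4 := by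
    have hnL' : (n : ℝ) ≤ L := by exact_mod_cast hnL
    calc (n : ℝ) * (ε / 4 * (1 / L)) ≤ (L : ℝ) * (ε / 4 * (1 / L)) := by
          exact mul_le_mul_of_nonneg_right hnL' (by positivity)
    _ = ε / 4 := by field_simp
  show dist ((∑ v ∈ Finset.range (n + 1), g (a v)) / L) (∫ y in (0 : ℝ)..c, g y) < ε
  rw [Real.dist_eq, key]
  calc |(∑ k ∈ Finset.range n, (g (a k) / L - ∫ y in a k..a (k + 1), g y))
        + (g (a n) / L - ∫ y in a n..c, g y)|
      ≤ |∑ k ∈ Finset.range n, (g (a k) / L - ∫ y in a k..a (k + 1), g y)|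
        + |g (a n) / L - ∫ y in a n..c, g y| := abs_add_le _ _
  _ ≤ ε / 4 + (M / L + M / L) := add_le_add (hsumbd.trans hn4) hedge
  _ < ε := by linarith

section LLN
variable {Ω : Type*} [MeasureSpace Ω] [IsProbabilityMeasure (ℙ : Measure Ω)]

lemma lln_aux (Z : ℕ → ℕ → Ω → ℝ) (hm : ∀ L v, Measurable (Z L v))
    (hb : ∀ L v, v ≤ L → ∀ a, |Z L v a| ≤ 1)
    (hc : ∀ L, 1 ≤ L → ∀ v, v ≤ L → ∫ a, Z L v a ∂ℙ = 0)
    (hi : ∀ L, iIndepFun (Z L) ℙ)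
    (n : ℕ → ℕ) (hn : ∀ L, n L ≤ L) :
    ∀ᵐ a ∂ℙ, Tendsto (fun L : ℕ => (∑ v ∈ Finset.range (n L + 1), Z L v a) / L)
      atTop (𝓝 0) := by
  set S : ℕ → Ω → ℝ := fun L a => ∑ v ∈ Finset.range (n L + 1), Z L v a with hSdef
  have hSmeas : ∀ L, Measurable (S L) := fun L =>
    Finset.measurable_sum _ fun v _ => hm L v
  have hSbd : ∀ L a, |S L a| ≤ (L : ℝ) + 1 := by
    intro L a
    calc |S L a| ≤ ∑ v ∈ Finset.range (n L + 1), |Z L v a| := Finset.abs_sum_le_sum_abs _ _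
    _ ≤ ∑ _v ∈ Finset.range (n L + 1), (1 : ℝ) := Finset.sum_le_sum fun v hv =>
        hb L v (by have := Finset.mem_range.mp hv; have := hn L; omega) a
    _ = (n L : ℝ) + 1 := by simp
    _ ≤ (L : ℝ) + 1 := by
        have h' : (n L : ℝ) ≤ (L : ℝ) := by exact_mod_cast hn L
        linarith
  have hmom : ∀ L, 1 ≤ L → ∫ a, (S L a) ^ 4 ∂ℙ ≤ 12 * (L : ℝ) ^ 2 := by
    intro L hL
    have h4 := (moment_bounds (Z L) (hm L) (hi L) (Finset.range (n L + 1))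
      (fun v hv => hb L v (by have := Finset.mem_range.mp hv; have := hn L; omega))
      (fun v hv => hc L hL v (by have := Finset.mem_range.mp hv; have := hn L; omega))).2
    refine h4.trans ?_
    rw [Finset.card_range]
    have h1 : ((n L + 1 : ℕ) : ℝ) ≤ (L : ℝ) + 1 := by
      have h' : (n L : ℝ) ≤ (L : ℝ) := by exact_mod_cast hn L
      push_cast; linarith
    have hL1 : (1 : ℝ) ≤ (L : ℝ) := by exact_mod_cast hL
    nlinarith
  -- Borel-Cantelli for each k
  have hBC : ∀ k : ℕ, ∀ᵐ a ∂ℙ, ∀ᶠ L : ℕ in atTop,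
      ¬ ((L : ℝ) / (k + 1)) ^ 4 ≤ (S L a) ^ 4 := by
    intro k
    set A : ℕ → Set Ω := fun L => {a | ((L : ℝ) / (k + 1)) ^ 4 ≤ (S L a) ^ 4} with hAdef
    have hbound : ∀ L, 1 ≤ L → ℙ (A L) ≤ ENNReal.ofReal (12 * ((k : ℝ) + 1) ^ 4 / L ^ 2) := by
      intro L hL
      have hLpos : (0 : ℝ) < L := by exact_mod_cast hL
      have ht : (0 : ℝ) < ((L : ℝ) / (k + 1)) ^ 4 := by positivity
      have hint4 : Integrable (fun a => (S L a) ^ 4) ℙ := by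
        refine integrable_of_abs_le ((hSmeas L).pow_const 4) (C := ((L : ℝ) + 1) ^ 4) ?_
        intro a
        rw [abs_pow]
        exact pow_le_pow_left₀ (abs_nonneg _) (hSbd L a) 4
      have hmarkov := mul_meas_ge_le_integral_of_nonneg
        (Eventually.of_forall fun a => by positivity) hint4 (((L : ℝ) / (k + 1)) ^ 4)
      have h1 : (ℙ (A L)).toReal ≤ 12 * ((k : ℝ) + 1) ^ 4 / L ^ 2 := by
        have h2 : (((L : ℝ) / (k + 1)) ^ 4) * (ℙ (A L)).toReal ≤ 12 * (L : ℝ) ^ 2 :=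
          le_trans hmarkov (hmom L hL)
        rw [← le_div_iff₀' ht] at h2
        refine h2.trans_eq ?_
        rw [div_pow]
        field_simp
      calc ℙ (A L) = ENNReal.ofReal ((ℙ (A L)).toReal) := by
            rw [ENNReal.ofReal_toReal (measure_ne_top _ _)]
      _ ≤ ENNReal.ofReal (12 * ((k : ℝ) + 1) ^ 4 / L ^ 2) := ENNReal.ofReal_le_ofReal h1
    have hsummable : (∑' L, ℙ (A L)) ≠ ⊤ := by
      set f : ℕ → ℝ≥0∞ := fun L =>
        if L = 0 then 1 else ENNReal.ofReal (12 * ((k : ℝ) + 1) ^ 4 / L ^ 2) with hfdef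
      have hle : ∀ L, ℙ (A L) ≤ f L := by
        intro L
        rcases Nat.eq_zero_or_pos L with h0 | h1
        · subst h0; simp [hfdef]; exact prob_le_one
        · simp only [hfdef, if_neg (Nat.pos_iff_ne_zero.mp h1)]
          exact hbound L h1
      refine ne_top_of_le_ne_top ?_ (ENNReal.tsum_le_tsum hle)
      have hsum : Summable (fun L : ℕ => 12 * ((k : ℝ) + 1) ^ 4 / (L : ℝ) ^ 2) := by
        have h1 : Summable (fun L : ℕ => 1 / (L : ℝ) ^ 2) :=
          Real.summable_one_div_nat_pow.mpr one_lt_two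
        have h2 := h1.mul_left (12 * ((k : ℝ) + 1) ^ 4)
        refine h2.congr fun L => ?_
        rw [mul_one_div]
      have heq : ∀ L : ℕ, f L ≤ ENNReal.ofReal (12 * ((k : ℝ) + 1) ^ 4 / (L : ℝ) ^ 2) + 
          (if L = 0 then 1 else 0) := by
        intro L
        rcases Nat.eq_zero_or_pos L with h0 | h1
        · subst h0; simp [hfdef]
        · simp [hfdef, Nat.pos_iff_ne_zero.mp h1]
      refine ne_top_of_le_ne_top ?_ (ENNReal.tsum_le_tsum heq)
      rw [ENNReal.tsum_add]
      refine ENNReal.add_ne_top.mpr ⟨?_, ?_⟩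
      · rw [← ENNReal.ofReal_tsum_of_nonneg (fun L => by positivity) hsum]
        exact ENNReal.ofReal_ne_top
      · rw [tsum_eq_single 0 (by intro b hb0; simp [hb0])]
        · simp
    have := MeasureTheory.ae_eventually_notMem hsummable
    filter_upwards [this] with a ha
    filter_upwards [ha] with L hL
    exact hL
  have hAll : ∀ᵐ a ∂ℙ, ∀ k : ℕ, ∀ᶠ L : ℕ in atTop,
      ¬ ((L : ℝ) / (k + 1)) ^ 4 ≤ (S L a) ^ 4 := ae_all_iff.mpr hBC
  filter_upwards [hAll] with a ha
  rw [Metric.tendsto_atTop]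
  intro ε hε
  obtain ⟨k, hk⟩ := exists_nat_one_div_lt hε
  obtain ⟨N, hN⟩ := eventually_atTop.mp ((ha k).and (eventually_ge_atTop 1))
  refine ⟨N, fun L hL => ?_⟩
  obtain ⟨hnot, hL1⟩ := hN L hL
  have hLpos : (0 : ℝ) < L := by exact_mod_cast hL1
  have htpos : (0 : ℝ) < (L : ℝ) / (k + 1) := by positivity
  have habs : |S L a| < (L : ℝ) / (k + 1) := by
    by_contra hcon
    push_neg at hcon
    apply hnot
    calc ((L : ℝ) / (k + 1)) ^ 4 ≤ |S L a| ^ 4 := pow_le_pow_left₀ htpos.le hcon 4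
    _ = (S L a) ^ 4 := by rw [pow_abs, abs_of_nonneg (by positivity)]
  rw [Real.dist_eq, sub_zero, abs_div, abs_of_nonneg hLpos.le]
  calc |S L a| / L < ((L : ℝ) / (k + 1)) / L := by gcongr
  _ = 1 / ((k : ℝ) + 1) := by field_simp
  _ < ε := hk

end LLN

/-- Quenched limit of the macroscopic profile functional `𝒜^{(L)}` for the chain with
constant rate `r ≡ 1` and random independent degrees of freedom: if the degrees of
freedom `ω^{(L)}_v ∈ {1, …, K}` are independent with `ℙ(ω^{(L)}_v = i) = κ_i(v/L)`, then
almost surely `𝒜^{(L)}(x) → (Σ_i (1/i)∫₀^x κ_i)/(Σ_i (1/i)∫₀^1 κ_i)`. Here the value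
`i ∈ {1, …, K}` is encoded as `i = j + 1` with `j : Fin K`. -/
theorem quenched_profile_limit_random_dof {Ω : Type*} [MeasureSpace Ω]
    [IsProbabilityMeasure (ℙ : Measure Ω)]
    (K : ℕ) (hK : 1 ≤ K)
    (κ : Fin K → ℝ → ℝ)
    (hκcont : ∀ j, ContinuousOn (κ j) (Set.Icc 0 1))
    (hκnonneg : ∀ j, ∀ y ∈ Set.Icc (0 : ℝ) 1, 0 ≤ κ j y)
    (hκsum : ∀ y ∈ Set.Icc (0 : ℝ) 1, ∑ j, κ j y = 1)
    (ω : ℕ → ℕ → Ω → ℕ)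
    (hmeas : ∀ L v, Measurable (ω L v))
    (hval : ∀ L v a, ω L v a ∈ Finset.Icc 1 K)
    (hindep : iIndepFun (fun p : ℕ × ℕ => ω p.1 p.2) ℙ)
    (hdist : ∀ L, 1 ≤ L → ∀ v, v ≤ L → ∀ j : Fin K,
      ℙ {a | ω L v a = (j : ℕ) + 1} = ENNReal.ofReal (κ j (v / L)))
    (x : ℝ) (hx : x ∈ Set.Icc (0 : ℝ) 1) :
    ∀ᵐ a ∂ℙ, Tendsto (fun L : ℕ =>
        (∑ m ∈ Finset.Icc 1 ⌊x * L⌋₊,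
            ((ω L (m - 1) a : ℝ) + (ω L m a : ℝ)) / ((ω L (m - 1) a : ℝ) * (ω L m a : ℝ))) /
          ∑ m ∈ Finset.Icc 1 L,
            ((ω L (m - 1) a : ℝ) + (ω L m a : ℝ)) / ((ω L (m - 1) a : ℝ) * (ω L m a : ℝ)))
      atTop
      (nhds ((∑ j : Fin K, (1 / ((j : ℝ) + 1)) * ∫ y in (0 : ℝ)..x, κ j y) /
        ∑ j : Fin K, (1 / ((j : ℝ) + 1)) * ∫ y in (0 : ℝ)..1, κ j y)) := by
  classical
  have hKpos : (0 : ℝ) < K := by exact_mod_cast hK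
  set g : ℝ → ℝ := fun y => ∑ j : Fin K, ((j : ℝ) + 1)⁻¹ * κ j y with hgdef
  have hgcont : ContinuousOn g (Set.Icc 0 1) :=
    continuousOn_finset_sum _ fun j _ => continuousOn_const.mul (hκcont j)
  have hgmem : ∀ y ∈ Set.Icc (0 : ℝ) 1, 0 ≤ g y ∧ g y ≤ 1 := by
    intro y hy
    constructor
    · exact Finset.sum_nonneg fun j _ => mul_nonneg (by positivity) (hκnonneg j y hy)
    · have hstep : g y ≤ ∑ j : Fin K, κ j y := by
        refine Finset.sum_le_sum fun j _ => ?_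
        have hone : ((j : ℝ) + 1)⁻¹ ≤ 1 := inv_le_one_of_one_le₀ (le_add_of_nonneg_left (by positivity))
        have h2 := hκnonneg j y hy
        nlinarith
      rw [hκsum y hy] at hstep
      exact hstep
  have hgK : ∀ y ∈ Set.Icc (0 : ℝ) 1, (K : ℝ)⁻¹ ≤ g y := by
    intro y hy
    have h1 : ∑ j : Fin K, (K : ℝ)⁻¹ * κ j y ≤ g y := by
      refine Finset.sum_le_sum fun j _ => ?_
      have hj1 : (j : ℝ) + 1 ≤ K := by exact_mod_cast Nat.succ_le_of_lt j.2
      exact mul_le_mul_of_nonneg_right (inv_anti₀ (by positivity) hj1)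
        (hκnonneg j y hy)
    calc (K : ℝ)⁻¹ = ∑ j : Fin K, (K : ℝ)⁻¹ * κ j y := by
          rw [← Finset.mul_sum, hκsum y hy, mul_one]
    _ ≤ g y := h1
  have huIcc : Set.uIcc (0 : ℝ) 1 = Set.Icc 0 1 := Set.uIcc_of_le zero_le_one
  have hκint : ∀ (j : Fin K) (c : ℝ), c ∈ Set.Icc (0 : ℝ) 1 →
      IntervalIntegrable (κ j) volume 0 c := by
    intro j c hc
    refine ((hκcont j).mono ?_).intervalIntegrable
    calc Set.uIcc 0 c ⊆ Set.uIcc 0 1 :=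
          Set.uIcc_subset_uIcc (by rw [huIcc]; exact ⟨le_refl _, zero_le_one⟩)
            (by rw [huIcc]; exact hc)
    _ = Set.Icc 0 1 := huIcc
  have hIeq : ∀ c ∈ Set.Icc (0 : ℝ) 1,
      (∑ j : Fin K, (1 / ((j : ℝ) + 1)) * ∫ y in (0 : ℝ)..c, κ j y)
        = ∫ y in (0 : ℝ)..c, g y := by
    intro c hc
    rw [hgdef]
    rw [intervalIntegral.integral_finset_sum (fun j _ => (hκint j c hc).const_mul _)]
    refine Finset.sum_congr rfl fun j _ => ?_
    rw [intervalIntegral.integral_const_mul, one_div]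
  set Z : ℕ → ℕ → Ω → ℝ := fun L v c => ((ω L v c : ℝ))⁻¹ - g ((v : ℝ) / (L : ℝ)) with hZdef
  have homega : ∀ L v c, 1 ≤ ω L v c ∧ ω L v c ≤ K := fun L v c =>
    Finset.mem_Icc.mp (hval L v c)
  have hinv01 : ∀ L v c, 0 < ((ω L v c : ℝ))⁻¹ ∧ ((ω L v c : ℝ))⁻¹ ≤ 1 := by
    intro L v c
    have h1 : (1 : ℝ) ≤ (ω L v c : ℝ) := by exact_mod_cast (homega L v c).1
    exact ⟨inv_pos.mpr (by linarith), inv_le_one_of_one_le₀ h1⟩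
  have hdivIcc : ∀ {v L : ℕ}, v ≤ L → ((v : ℝ) / (L : ℝ)) ∈ Set.Icc (0 : ℝ) 1 := by
    intro v L hvL
    rcases Nat.eq_zero_or_pos L with rfl | hL1
    · have hv0 : v = 0 := Nat.le_zero.mp hvL
      subst hv0; norm_num
    · have hLpos : (0 : ℝ) < L := by exact_mod_cast hL1
      exact ⟨by positivity, by rw [div_le_one hLpos]; exact_mod_cast hvL⟩
  have hZmeas : ∀ L v, Measurable (Z L v) := by
    intro L v
    exact (measurable_from_top (f := fun m : ℕ => ((m : ℝ))⁻¹ - g ((v : ℝ) / L))).comp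
      (hmeas L v)
  have hZbd : ∀ L v, v ≤ L → ∀ c, |Z L v c| ≤ 1 := by
    intro L v hvL c
    obtain ⟨hg0, hg1⟩ := hgmem _ (hdivIcc hvL)
    obtain ⟨hi0, hi1⟩ := hinv01 L v c
    show |((ω L v c : ℝ))⁻¹ - g ((v : ℝ) / L)| ≤ 1
    rw [abs_le]
    constructor <;> linarith
  have hinvmeas : ∀ L v, Measurable (fun c => ((ω L v c : ℝ))⁻¹) := by
    intro L v
    exact (measurable_from_top (f := fun m : ℕ => ((m : ℝ))⁻¹)).comp (hmeas L v)
  have hexp : ∀ L, 1 ≤ L → ∀ v, v ≤ L →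
      ∫ c, ((ω L v c : ℝ))⁻¹ ∂ℙ = g ((v : ℝ) / L) := by
    intro L hL v hvL
    have hrep : (fun c => ((ω L v c : ℝ))⁻¹) = fun c =>
        ∑ j : Fin K, Set.indicator {d | ω L v d = (j : ℕ) + 1}
          (fun _ => ((j : ℝ) + 1)⁻¹) c := by
      funext c
      obtain ⟨h1, h2⟩ := homega L v c
      have hjlt : ω L v c - 1 < K := by omega
      rw [Finset.sum_eq_single (⟨ω L v c - 1, hjlt⟩ : Fin K)]
      · rw [Set.indicator_of_mem]
        · have h3 : ((ω L v c - 1 : ℕ) : ℝ) + 1 = (ω L v c : ℝ) := by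
            have h4 : (ω L v c - 1) + 1 = ω L v c := by omega
            exact_mod_cast congrArg (Nat.cast (R := ℝ)) h4
          rw [h3]
        · show ω L v c = (ω L v c - 1) + 1
          omega
      · intro j _ hne
        apply Set.indicator_of_notMem
        intro hmem
        apply hne
        have h5 : ω L v c = (j : ℕ) + 1 := hmem
        apply Fin.ext
        show (j : ℕ) = ω L v c - 1
        omega
      · intro hmem
        exact absurd (Finset.mem_univ _) hmem
    have hms : ∀ j : Fin K, MeasurableSet {d | ω L v d = (j : ℕ) + 1} :=
      fun j => hmeas L v (measurableSet_singleton ((j : ℕ) + 1))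
    rw [hrep, integral_finset_sum _ (fun j _ => (integrable_const _).indicator (hms j))]
    rw [hgdef]
    refine Finset.sum_congr rfl fun j _ => ?_
    rw [integral_indicator_const _ (hms j)]
    rw [measureReal_def, hdist L hL v hvL j, smul_eq_mul,
      ENNReal.toReal_ofReal (hκnonneg j _ (hdivIcc hvL)), mul_comm]
  have hZcent : ∀ L, 1 ≤ L → ∀ v, v ≤ L → ∫ c, Z L v c ∂ℙ = 0 := by
    intro L hL v hvL
    have hint : Integrable (fun c => ((ω L v c : ℝ))⁻¹) ℙ := by
      refine integrable_of_abs_le (hinvmeas L v) (C := 1) fun c => ?_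
      obtain ⟨hi0, hi1⟩ := hinv01 L v c
      rw [abs_of_pos hi0]; exact hi1
    show ∫ c, (((ω L v c : ℝ))⁻¹ - g ((v : ℝ) / L)) ∂ℙ = 0
    rw [integral_sub hint (integrable_const _), integral_const, hexp L hL v hvL,
      probReal_univ, one_smul, sub_self]
  have hrow : ∀ L, iIndepFun (Z L) ℙ := by
    intro L
    have h1 := iIndepFun_comp_of_injective hindep (fun v : ℕ => ((L, v) : ℕ × ℕ))
      (fun u v huv => by simpa using congrArg Prod.snd huv)
    exact h1.comp (fun v => fun m : ℕ => ((m : ℝ))⁻¹ - g ((v : ℝ) / L))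
      (fun v => measurable_from_top)
  have hn1 : ∀ L : ℕ, ⌊x * L⌋₊ ≤ L := by
    intro L
    have hxL : x * L ≤ L := mul_le_of_le_one_left (Nat.cast_nonneg L) hx.2
    calc ⌊x * L⌋₊ ≤ ⌊((L : ℕ) : ℝ)⌋₊ := Nat.floor_le_floor hxL
    _ = L := Nat.floor_natCast L
  have hlln1 := lln_aux Z hZmeas hZbd hZcent hrow (fun L => ⌊x * L⌋₊) hn1
  have hlln2 := lln_aux Z hZmeas hZbd hZcent hrow (fun L => L) (fun L => le_refl L)
  have hr1 := riemann_tendsto g hgcont x hx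
  have hr2 := riemann_tendsto g hgcont 1 ⟨zero_le_one, le_refl 1⟩
  have hr2' : Tendsto (fun L : ℕ => (∑ v ∈ Finset.range (L + 1), g (v / L)) / L)
      atTop (𝓝 (∫ y in (0 : ℝ)..1, g y)) := by
    refine hr2.congr fun L => ?_
    norm_num
  have hgint : IntervalIntegrable g volume 0 1 := by
    refine (hgcont.mono ?_).intervalIntegrable
    rw [huIcc]
  have hB : (K : ℝ)⁻¹ ≤ ∫ y in (0 : ℝ)..1, g y := by
    calc (K : ℝ)⁻¹ = ∫ _y in (0 : ℝ)..1, (K : ℝ)⁻¹ := by simp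
    _ ≤ ∫ y in (0 : ℝ)..1, g y :=
        intervalIntegral.integral_mono_on zero_le_one (intervalIntegrable_const) hgint hgK
  have hBpos : 0 < ∫ y in (0 : ℝ)..1, g y := lt_of_lt_of_le (by positivity) hB
  rw [hIeq x hx, hIeq 1 ⟨zero_le_one, le_refl 1⟩]
  filter_upwards [hlln1, hlln2] with b h1 h2
  have hψ : ∀ L m : ℕ,
      ((ω L (m - 1) b : ℝ) + (ω L m b : ℝ)) / ((ω L (m - 1) b : ℝ) * (ω L m b : ℝ))
        = ((ω L (m - 1) b : ℝ))⁻¹ + ((ω L m b : ℝ))⁻¹ := by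
    intro L m
    have hp : (0 : ℝ) < (ω L (m - 1) b : ℝ) := by
      exact_mod_cast Nat.lt_of_lt_of_le Nat.zero_lt_one (homega L (m - 1) b).1
    have hq : (0 : ℝ) < (ω L m b : ℝ) := by
      exact_mod_cast Nat.lt_of_lt_of_le Nat.zero_lt_one (homega L m b).1
    field_simp
    ring
  have hkey : ∀ L nn : ℕ,
      (∑ m ∈ Finset.Icc 1 nn,
        ((ω L (m - 1) b : ℝ) + (ω L m b : ℝ)) / ((ω L (m - 1) b : ℝ) * (ω L m b : ℝ)))
      = 2 * (∑ v ∈ Finset.range (nn + 1), (Z L v b + g ((v : ℝ) / L)))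
        - ((ω L 0 b : ℝ))⁻¹ - ((ω L nn b : ℝ))⁻¹ := by
    intro L nn
    rw [Finset.sum_congr rfl (fun m _ => hψ L m),
      sum_psi (fun v => ((ω L v b : ℝ))⁻¹) nn]
    have hss : ∑ v ∈ Finset.range (nn + 1), ((ω L v b : ℝ))⁻¹
        = ∑ v ∈ Finset.range (nn + 1), (Z L v b + g ((v : ℝ) / L)) := by
      refine Finset.sum_congr rfl fun v _ => ?_
      show ((ω L v b : ℝ))⁻¹ = ((ω L v b : ℝ))⁻¹ - g ((v : ℝ) / L) + g ((v : ℝ) / L)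
      ring
    rw [hss]
  have main : ∀ nf : ℕ → ℕ, (∀ L, nf L ≤ L) →
      Tendsto (fun L : ℕ => (∑ v ∈ Finset.range (nf L + 1), Z L v b) / L) atTop (𝓝 0) →
      ∀ I : ℝ,
      Tendsto (fun L : ℕ => (∑ v ∈ Finset.range (nf L + 1), g ((v : ℝ) / L)) / L)
        atTop (𝓝 I) →
      Tendsto (fun L : ℕ => (∑ m ∈ Finset.Icc 1 (nf L),
        ((ω L (m - 1) b : ℝ) + (ω L m b : ℝ)) / ((ω L (m - 1) b : ℝ) * (ω L m b : ℝ))) / L)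
        atTop (𝓝 (2 * I)) := by
    intro nf hnf hZt I hgt
    have hbt : Tendsto (fun L : ℕ =>
        (((ω L 0 b : ℝ))⁻¹ + ((ω L (nf L) b : ℝ))⁻¹) / L) atTop (𝓝 0) := by
      refine squeeze_zero (fun L => ?_) (fun L => ?_)
        (tendsto_const_div_atTop_nhds_zero_nat 2)
      · have := (hinv01 L 0 b).1
        have := (hinv01 L (nf L) b).1
        positivity
      · rcases Nat.eq_zero_or_pos L with rfl | hL1
        · norm_num
        · have hLpos : (0 : ℝ) < L := by exact_mod_cast hL1
          refine (div_le_div_iff_of_pos_right hLpos).mpr ?_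
          have := (hinv01 L 0 b).2
          have := (hinv01 L (nf L) b).2
          linarith
    have heq : ∀ L : ℕ, (∑ m ∈ Finset.Icc 1 (nf L),
        ((ω L (m - 1) b : ℝ) + (ω L m b : ℝ)) / ((ω L (m - 1) b : ℝ) * (ω L m b : ℝ))) / L
        = 2 * ((∑ v ∈ Finset.range (nf L + 1), Z L v b) / L)
          + 2 * ((∑ v ∈ Finset.range (nf L + 1), g ((v : ℝ) / L)) / L)
          - (((ω L 0 b : ℝ))⁻¹ + ((ω L (nf L) b : ℝ))⁻¹) / L := by
      intro L
      rw [hkey L (nf L), Finset.sum_add_distrib]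
      ring
    have hcomb := ((hZt.const_mul 2).add (hgt.const_mul 2)).sub hbt
    rw [show (2 : ℝ) * 0 + 2 * I - 0 = 2 * I by ring] at hcomb
    exact Tendsto.congr (fun L => (heq L).symm) hcomb
  have hnum := main (fun L => ⌊x * L⌋₊) hn1 h1 _ hr1
  have hden := main (fun L => L) (fun L => le_refl L) h2 _ hr2'
  have hABne : (2 : ℝ) * ∫ y in (0 : ℝ)..1, g y ≠ 0 := by positivity
  have hfinal := hnum.div hden hABne
  rw [mul_div_mul_left _ _ (two_ne_zero)] at hfinal
  refine Tendsto.congr' ?_ hfinal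
  filter_upwards [eventually_ge_atTop 1] with L hL
  have hL0 : (L : ℝ) ≠ 0 := Nat.cast_ne_zero.mpr (by omega)
  simp only [Pi.div_apply]
  rw [div_div_div_comm, div_self hL0, div_one]
end

section
/- Let L ≥ 2 be an integer, let ω : {0, …, L} → ℝ and r : {1, …, L} → ℝ be positive, let ψ(m) = (ω_{m−1}+ω_m)/(r_m ω_{m−1} ω_m), Φ̲(m) = Σ_{i=1}^m ψ(i), Φ̄(m) = Σ_{i=m+1}^L ψ(i), and S(a,b) = Φ̲(a)Φ̲(b) + Φ̄(a)Φ̄(b). Then for every 1 ≤ i ≤ L−1: (r_{i+1}/(r_i+r_{i+1})) · ∫₀¹ [p²·S(i+1,i+1) + 2p(1−p)·S(i,i+1) + (1−p)²·S(i,i)] dBeta(ω_{i+1}/2, ω_i/2; p) + (r_i/(r_i+r_{i+1})) · ∫₀¹ [p²·S(i−1,i−1) + 2p(1−p)·S(i,i−1) + (1−p)²·S(i,i)] dBeta(ω_{i−1}/2, ω_i/2; p) − S(i,i) = 2(r_{i+1}/(r_i+r_{i+1}))·ψ(i+1)² · ω_{i+1}(ω_{i+1}+2)/((ω_i+ω_{i+1})(ω_i+ω_{i+1}+2))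 + 2(r_i/(r_i+r_{i+1}))·ψ(i)² · ω_{i−1}(ω_{i−1}+2)/((ω_{i−1}+ω_i)(ω_{i−1}+ω_i+2)). In particular this expected increment is strictly positive. (This is the drift of the functional S when the two dual particles occupy the same interior site i.) -/
open Real

/-- `ψ(m) = (ω_{m−1} + ω_m)/(r_m ω_{m−1} ω_m)`. -/
noncomputable def psi (ω r : ℕ → ℝ) (m : ℕ) : ℝ :=
  (ω (m - 1) + ω m) / (r m * ω (m - 1) * ω m)

/-- `Φ̲(m) = Σ_{i=1}^m ψ(i)`. -/
noncomputable def phiLow (ω r : ℕ → ℝ) (m : ℕ) : ℝ :=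
  ∑ i ∈ Finset.Icc 1 m, psi ω r i

/-- `Φ̄(m) = Σ_{i=m+1}^L ψ(i)`. -/
noncomputable def phiHigh (L : ℕ) (ω r : ℕ → ℝ) (m : ℕ) : ℝ :=
  ∑ i ∈ Finset.Icc (m + 1) L, psi ω r i

/-- `S(a,b) = Φ̲(a)Φ̲(b) + Φ̄(a)Φ̄(b)`. -/
noncomputable def Sfun (L : ℕ) (ω r : ℕ → ℝ) (a b : ℕ) : ℝ :=
  phiLow ω r a * phiLow ω r b + phiHigh L ω r a * phiHigh L ω r b

/-- Integration of `f` against the `Beta(α, β)` density on `(0,1)`. -/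
noncomputable def betaInt (α β : ℝ) (f : ℝ → ℝ) : ℝ :=
  ∫ p in Set.Ioo (0 : ℝ) 1,
    (p ^ (α - 1) * (1 - p) ^ (β - 1) /
      (Real.Gamma α * Real.Gamma β / Real.Gamma (α + β))) * f p

open MeasureTheory Set in
lemma betaFn_complex_eq (a b : ℝ) :
    Set.EqOn (fun x : ℝ => ((x : ℂ) ^ ((a : ℂ) - 1) * ((1 : ℂ) - x) ^ ((b : ℂ) - 1)))
      (fun x : ℝ => ((x ^ (a - 1) * (1 - x) ^ (b - 1) : ℝ) : ℂ)) (Set.Ioo 0 1) := by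
  intro x hx
  have h1 : (0:ℝ) ≤ x := hx.1.le
  have h2 : (0:ℝ) ≤ 1 - x := by linarith [hx.2]
  simp only [Complex.ofReal_mul, Complex.ofReal_cpow h1, Complex.ofReal_cpow h2]
  push_cast
  ring_nf

open MeasureTheory Set in
lemma beta_integrableOn (a b : ℝ) (ha : 0 < a) (hb : 0 < b) :
    IntegrableOn (fun p : ℝ => p ^ (a - 1) * (1 - p) ^ (b - 1)) (Set.Ioo 0 1) := by
  have hc : IntervalIntegrable
      (fun x : ℝ => (x : ℂ) ^ ((a : ℂ) - 1) * ((1 : ℂ) - x) ^ ((b : ℂ) - 1)) volume 0 1 :=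
    Complex.betaIntegral_convergent (by simpa using ha) (by simpa using hb)
  have hIoc := (intervalIntegrable_iff_integrableOn_Ioc_of_le (by norm_num : (0:ℝ) ≤ 1)).mp hc
  have hIoo := hIoc.mono_set Set.Ioo_subset_Ioc_self
  have hIoo2 : IntegrableOn (fun x : ℝ => ((x ^ (a - 1) * (1 - x) ^ (b - 1) : ℝ) : ℂ))
      (Set.Ioo 0 1) :=
    hIoo.congr_fun (betaFn_complex_eq a b) measurableSet_Ioo
  simpa [IntegrableOn] using hIoo2.re

open MeasureTheory Set in
lemma beta_integral_eq (a b : ℝ) (ha : 0 < a) (hb : 0 < b) :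
    ∫ p in Set.Ioo (0:ℝ) 1, p ^ (a - 1) * (1 - p) ^ (b - 1)
      = Real.Gamma a * Real.Gamma b / Real.Gamma (a + b) := by
  have key := Complex.Gamma_mul_Gamma_eq_betaIntegral
    (s := (a:ℂ)) (t := (b:ℂ)) (by simpa using ha) (by simpa using hb)
  have hBI : Complex.betaIntegral (a:ℂ) (b:ℂ)
      = ((∫ p in Set.Ioo (0:ℝ) 1, p ^ (a - 1) * (1 - p) ^ (b - 1) : ℝ) : ℂ) := by
    rw [Complex.betaIntegral, intervalIntegral.integral_of_le (by norm_num : (0:ℝ) ≤ 1),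
      MeasureTheory.integral_Ioc_eq_integral_Ioo,
      MeasureTheory.setIntegral_congr_fun measurableSet_Ioo (betaFn_complex_eq a b)]
    exact integral_ofReal
  rw [hBI] at key
  have key2 : Real.Gamma a * Real.Gamma b
      = Real.Gamma (a + b) * ∫ p in Set.Ioo (0:ℝ) 1, p ^ (a - 1) * (1 - p) ^ (b - 1) := by
    have h := key
    rw [show ((a:ℂ) + (b:ℂ)) = ((a + b : ℝ) : ℂ) by push_cast; ring, Complex.Gamma_ofReal,
      Complex.Gamma_ofReal, Complex.Gamma_ofReal, ← Complex.ofReal_mul, ← Complex.ofReal_mul]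
      at h
    exact_mod_cast h
  have hG : Real.Gamma (a + b) ≠ 0 := (Real.Gamma_pos_of_pos (by linarith)).ne'
  field_simp
  linarith [key2]

open MeasureTheory Set in
lemma betaInt_poly (a b A B C : ℝ) (ha : 0 < a) (hb : 0 < b) :
    betaInt a b (fun p => p ^ 2 * A + 2 * (p * (1 - p)) * B + (1 - p) ^ 2 * C)
      = (a * (a + 1) * A + 2 * (a * b) * B + b * (b + 1) * C) / ((a + b) * (a + b + 1)) := by
  set K : ℝ := Real.Gamma a * Real.Gamma b / Real.Gamma (a + b) with hK
  have hGa := Real.Gamma_pos_of_pos ha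
  have hGb := Real.Gamma_pos_of_pos hb
  have hGab := Real.Gamma_pos_of_pos (by linarith : 0 < a + b)
  have hKpos : 0 < K := by positivity
  have h2 : Set.EqOn
      (fun p : ℝ => p ^ (a - 1) * (1 - p) ^ (b - 1) / K *
        (p ^ 2 * A + 2 * (p * (1 - p)) * B + (1 - p) ^ 2 * C))
      (fun p : ℝ => (A / K) * (p ^ (a + 2 - 1) * (1 - p) ^ (b - 1)) +
        (2 * B / K) * (p ^ (a + 1 - 1) * (1 - p) ^ (b + 1 - 1)) +
        (C / K) * (p ^ (a - 1) * (1 - p) ^ (b + 2 - 1))) (Set.Ioo 0 1) := by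
    intro p hp
    have hp0 : (0:ℝ) < p := hp.1
    have hp1 : (0:ℝ) < 1 - p := by linarith [hp.2]
    have e2 : ∀ x : ℝ, 0 < x → x ^ (2:ℝ) = x ^ 2 := fun x hx => by
      rw [show (2:ℝ) = ((2:ℕ):ℝ) by norm_num, Real.rpow_natCast]
    simp only
    rw [show a + 2 - 1 = (a - 1) + 2 by ring, show a + 1 - 1 = (a - 1) + 1 by ring,
      show b + 1 - 1 = (b - 1) + 1 by ring, show b + 2 - 1 = (b - 1) + 2 by ring,
      Real.rpow_add hp0, Real.rpow_add hp0, Real.rpow_add hp1, Real.rpow_add hp1,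
      Real.rpow_one, Real.rpow_one, e2 p hp0, e2 (1 - p) hp1]
    ring
  have i1 := beta_integrableOn (a + 2) b (by linarith) hb
  have i2 := beta_integrableOn (a + 1) (b + 1) (by linarith) (by linarith)
  have i3 := beta_integrableOn a (b + 2) ha (by linarith)
  have hadd1 : MeasureTheory.IntegrableOn (fun x : ℝ =>
      A / K * (x ^ (a + 2 - 1) * (1 - x) ^ (b - 1)) +
      2 * B / K * (x ^ (a + 1 - 1) * (1 - x) ^ (b + 1 - 1))) (Set.Ioo 0 1) :=
    (i1.const_mul _).add (i2.const_mul _)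
  rw [betaInt, MeasureTheory.setIntegral_congr_fun measurableSet_Ioo h2,
    MeasureTheory.integral_add hadd1 (i3.const_mul _),
    MeasureTheory.integral_add (i1.const_mul (A / K)) (i2.const_mul (2 * B / K)),
    MeasureTheory.integral_const_mul _, MeasureTheory.integral_const_mul _,
    MeasureTheory.integral_const_mul _,
    beta_integral_eq (a + 2) b (by linarith) hb,
    beta_integral_eq (a + 1) (b + 1) (by linarith) (by linarith),
    beta_integral_eq a (b + 2) ha (by linarith)]
  have g1 : Real.Gamma (a + 2) = (a + 1) * a * Real.Gamma a := by
    rw [show a + 2 = (a + 1) + 1 by ring, Real.Gamma_add_one (by linarith),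
      Real.Gamma_add_one ha.ne']; ring
  have g2 : Real.Gamma (a + 1) = a * Real.Gamma a := Real.Gamma_add_one ha.ne'
  have g3 : Real.Gamma (b + 1) = b * Real.Gamma b := Real.Gamma_add_one hb.ne'
  have g4 : Real.Gamma (b + 2) = (b + 1) * b * Real.Gamma b := by
    rw [show b + 2 = (b + 1) + 1 by ring, Real.Gamma_add_one (by linarith),
      Real.Gamma_add_one hb.ne']; ring
  have g5 : Real.Gamma (a + 2 + b) = (a + b + 1) * (a + b) * Real.Gamma (a + b) := by
    rw [show a + 2 + b = (a + b + 1) + 1 by ring, Real.Gamma_add_one (by linarith),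
      Real.Gamma_add_one (by linarith)]; ring
  have g6 : Real.Gamma (a + 1 + (b + 1)) = (a + b + 1) * (a + b) * Real.Gamma (a + b) := by
    rw [show a + 1 + (b + 1) = (a + b + 1) + 1 by ring, Real.Gamma_add_one (by linarith),
      Real.Gamma_add_one (by linarith)]; ring
  have g7 : Real.Gamma (a + (b + 2)) = (a + b + 1) * (a + b) * Real.Gamma (a + b) := by
    rw [show a + (b + 2) = (a + b + 1) + 1 by ring, Real.Gamma_add_one (by linarith),
      Real.Gamma_add_one (by linarith)]; ring
  rw [g1, g2, g3, g4, g5, g6, g7, hK]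
  field_simp

set_option maxHeartbeats 4000000 in
/-- The drift of the two-particle functional `S` when both dual particles occupy the same
interior site `i`: the expected increment equals the stated explicit expression, and in
particular it is strictly positive. -/
theorem drift_same_site (L : ℕ) (hL : 2 ≤ L) (ω r : ℕ → ℝ)
    (hω : ∀ m, m ≤ L → 0 < ω m) (hr : ∀ m, 1 ≤ m → m ≤ L → 0 < r m)
    (i : ℕ) (hi1 : 1 ≤ i) (hi2 : i ≤ L - 1) :
    (r (i + 1) / (r i + r (i + 1))) *
          betaInt (ω (i + 1) / 2) (ω i / 2) (fun p =>
            p ^ 2 * Sfun L ω r (i + 1) (i + 1) +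
              2 * (p * (1 - p)) * Sfun L ω r i (i + 1) +
              (1 - p) ^ 2 * Sfun L ω r i i)
        + (r i / (r i + r (i + 1))) *
          betaInt (ω (i - 1) / 2) (ω i / 2) (fun p =>
            p ^ 2 * Sfun L ω r (i - 1) (i - 1) +
              2 * (p * (1 - p)) * Sfun L ω r i (i - 1) +
              (1 - p) ^ 2 * Sfun L ω r i i)
        - Sfun L ω r i i
      = 2 * (r (i + 1) / (r i + r (i + 1))) * (psi ω r (i + 1)) ^ 2 *
            (ω (i + 1) * (ω (i + 1) + 2) /
              ((ω i + ω (i + 1)) * (ω i + ω (i + 1) + 2)))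
          + 2 * (r i / (r i + r (i + 1))) * (psi ω r i) ^ 2 *
            (ω (i - 1) * (ω (i - 1) + 2) /
              ((ω (i - 1) + ω i) * (ω (i - 1) + ω i + 2)))
      ∧ 0 < 2 * (r (i + 1) / (r i + r (i + 1))) * (psi ω r (i + 1)) ^ 2 *
            (ω (i + 1) * (ω (i + 1) + 2) /
              ((ω i + ω (i + 1)) * (ω i + ω (i + 1) + 2)))
          + 2 * (r i / (r i + r (i + 1))) * (psi ω r i) ^ 2 *
            (ω (i - 1) * (ω (i - 1) + 2) /
              ((ω (i - 1) + ω i) * (ω (i - 1) + ω i + 2))) := by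
  obtain ⟨j, rfl⟩ : ∃ j, i = j + 1 := ⟨i - 1, (Nat.succ_pred_eq_of_pos hi1).symm⟩
  have hjL : j + 2 ≤ L := by omega
  have hw0 : 0 < ω j := hω j (by omega)
  have hw1 : 0 < ω (j + 1) := hω (j + 1) (by omega)
  have hw2 : 0 < ω (j + 2) := hω (j + 2) (by omega)
  have hr1 : 0 < r (j + 1) := hr (j + 1) (by omega) (by omega)
  have hr2 : 0 < r (j + 2) := hr (j + 2) (by omega) (by omega)
  simp only [Nat.add_sub_cancel, show j + 1 + 1 = j + 2 from rfl]
  rw [betaInt_poly _ _ _ _ _ (by positivity) (by positivity),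
    betaInt_poly _ _ _ _ _ (by positivity) (by positivity)]
  have hc : psi ω r (j + 2) = (ω (j + 1) + ω (j + 2)) / (r (j + 2) * ω (j + 1) * ω (j + 2)) := by
    simp [psi]
  have hd : psi ω r (j + 1) = (ω j + ω (j + 1)) / (r (j + 1) * ω j * ω (j + 1)) := by
    simp [psi]
  have hPL1 : phiLow ω r (j + 2) = phiLow ω r (j + 1) + psi ω r (j + 2) :=
    Finset.sum_Icc_succ_top (by omega) _
  have hPL2 : phiLow ω r j = phiLow ω r (j + 1) - psi ω r (j + 1) := by
    have h : phiLow ω r (j + 1) = phiLow ω r j + psi ω r (j + 1) :=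
      Finset.sum_Icc_succ_top (by omega) _
    linarith
  have hsing : ∀ m : ℕ, (∑ k ∈ Finset.Ioc m (m + 1), psi ω r k) = psi ω r (m + 1) := by
    intro m
    rw [Nat.Ioc_succ_singleton, Finset.sum_singleton]
  have hPH1 : phiHigh L ω r (j + 2) = phiHigh L ω r (j + 1) - psi ω r (j + 2) := by
    have h : phiHigh L ω r (j + 1) = psi ω r (j + 2) + phiHigh L ω r (j + 2) := by
      unfold phiHigh
      rw [Finset.Icc_add_one_left_eq_Ioc (a := j + 1),
        Finset.Icc_add_one_left_eq_Ioc (a := j + 2),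
        ← Finset.sum_Ioc_consecutive _ (by omega : j + 1 ≤ j + 2) (by omega : j + 2 ≤ L),
        hsing (j + 1)]
    linarith
  have hPH2 : phiHigh L ω r j = phiHigh L ω r (j + 1) + psi ω r (j + 1) := by
    unfold phiHigh
    rw [Finset.Icc_add_one_left_eq_Ioc (a := j),
      Finset.Icc_add_one_left_eq_Ioc (a := j + 1),
      ← Finset.sum_Ioc_consecutive _ (by omega : j ≤ j + 1) (by omega : j + 1 ≤ L),
      hsing j]
    ring
  simp only [Sfun]
  rw [hPL1, hPL2, hPH1, hPH2, hc, hd]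
  set A := phiLow ω r (j + 1) with hA
  set B := phiHigh L ω r (j + 1) with hB
  set w0 := ω j
  set w1 := ω (j + 1)
  set w2 := ω (j + 2)
  set r1 := r (j + 1)
  set r2 := r (j + 2)
  have h12 : 0 < r1 + r2 := by linarith
  have h01 : 0 < w0 + w1 := by linarith
  have h12' : 0 < w1 + w2 := by linarith
  have h012 : 0 < w0 + w1 + 2 := by linarith
  have h122 : 0 < w1 + w2 + 2 := by linarith
  constructor
  · field_simp
    ring
  · positivity
end

section
/- Let V be a finite set (the bulk sites), B a finite set disjoint from V (the boundary sites), E a finite set of unordered pairs of sites of V (the bulk edges) and E∂ a finite set of pairs (u, v) with u ∈ V, v ∈ B (the boundary edges); let r assign a positive rate to every edge of E ∪ E∂, let ω : V → ℤ_{>0} assign degrees of freedom, and let T : B → ℝ_{>0} assign temperatures. For configurations ξ : V → ℝ_{≥0} of energies and (n, n̂) with n : V → ℕ, n̂ : B → ℕ of particles, define the duality function F(n, n̂, ξ) = Π_{u∈V} (ξ_u^{n_u} Γ(ω_u/2)/Γ(n_u + ω_u/2)) · Π_{v∈B} T(v)^{n̂_v}. Define (G F(n, n̂, ·))(ξ)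 = Σ_{(u,v)∈E} r_{(u,v)} ∫₀¹ (p^{ω_u/2−1}(1−p)^{ω_v/2−1}/B(ω_u/2, ω_v/2)) [F(n, n̂, ξ') − F(n, n̂, ξ)] dp + Σ_{(u,v)∈E∂} r_{(u,v)} ∫₀^∞ (η^{ω_u/2−1} e^{−η/T(v)}/(T(v)^{ω_u/2} Γ(ω_u/2))) [F(n, n̂, ξ'') − F(n, n̂, ξ)] dη, where ξ' replaces (ξ_u, ξ_v) by (p(ξ_u+ξ_v), (1−p)(ξ_u+ξ_v)) and ξ'' replaces ξ_u by η. Define (A F(·, ·, ξ))(n, n̂) = Σ_{(u,v)∈E} r_{(u,v)} Σ_{k=0}^{n_u+n_v} C(n_u+n_v, k) (B(k+ω_u/2, n_u+n_v−k+ω_v/2)/B(ω_u/2, ω_v/2)) [F(n', n̂, ξ) − F(n, n̂, ξ)] + Σ_{(u,v)∈E∂} r_{(u,v)} [F(n'', n̂'', ξ) − F(n, n̂, ξ)], where n' replaces (n_u, n_v) by (k, n_u+n_v−k), and (n'', n̂'') sets n_u to 0 and increases n̂_v by n_u. Then for every ξ, n, n̂: (G F(n, n̂, ·))(ξ) = (A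 F(·, ·, ξ))(n, n̂). -/
open Real MeasureTheory

/-- The duality function
`F(n, n̂, ξ) = Π_{u∈V} ξ_u^{n_u} Γ(ω_u/2)/Γ(n_u + ω_u/2) · Π_{v∈B} T(v)^{n̂_v}`. -/
noncomputable def dualityF {V Bd : Type*} [Fintype V] [Fintype Bd]
    (ω : V → ℕ) (T : Bd → ℝ) (n : V → ℕ) (nh : Bd → ℕ) (ξ : V → ℝ) : ℝ :=
  (∏ u, ξ u ^ n u * Real.Gamma ((ω u : ℝ) / 2) / Real.Gamma ((n u : ℝ) + (ω u : ℝ) / 2)) *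
    ∏ v, T v ^ nh v

/-- The energy configuration `ξ'` obtained from `ξ` by pooling the energies at `u`, `v`
and giving the fraction `p` to `u` and `1 − p` to `v`. -/
def energyUpdate {V : Type*} [DecidableEq V] (ξ : V → ℝ) (u v : V) (p : ℝ) : V → ℝ :=
  fun w => if w = u then p * (ξ u + ξ v) else if w = v then (1 - p) * (ξ u + ξ v) else ξ w

/-- The particle configuration `n'` obtained from `n` by pooling the particles at `u`,
`v` and placing `k` of them at `u` and the rest at `v`. -/
def particleUpdate {V : Type*} [DecidableEq V] (n : V → ℕ) (u v : V) (k : ℕ) : V → ℕ :=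
  fun w => if w = u then k else if w = v then n u + n v - k else n w

lemma integral_beta {a b : ℝ} (ha : 0 < a) (hb : 0 < b) :
    ∫ p in Set.Ioo (0:ℝ) 1, p ^ (a-1) * (1-p) ^ (b-1) = betaFn a b := by
  have h0 : Real.Gamma (a+b) ≠ 0 := (Real.Gamma_pos_of_pos (by linarith)).ne'
  have key : Complex.betaIntegral a b
      = ((∫ p in Set.Ioo (0:ℝ) 1, p ^ (a-1) * (1-p) ^ (b-1) : ℝ) : ℂ) := by
    rw [Complex.betaIntegral, ← MeasureTheory.integral_Ioc_eq_integral_Ioo,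
      ← intervalIntegral.integral_of_le zero_le_one, ← intervalIntegral.integral_ofReal]
    refine intervalIntegral.integral_congr fun x hx => ?_
    rw [Set.uIcc_of_le zero_le_one] at hx
    rw [Complex.ofReal_mul, Complex.ofReal_cpow hx.1,
      Complex.ofReal_cpow (by linarith [hx.2] : (0:ℝ) ≤ 1 - x)]
    push_cast
    ring
  have h2 := Complex.Gamma_mul_Gamma_eq_betaIntegral
    (s := (a:ℂ)) (t := (b:ℂ)) (by simpa using ha) (by simpa using hb)
  rw [key, ← Complex.ofReal_add, Complex.Gamma_ofReal, Complex.Gamma_ofReal,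
    Complex.Gamma_ofReal, ← Complex.ofReal_mul, ← Complex.ofReal_mul] at h2
  have h3 := Complex.ofReal_inj.mp h2
  rw [betaFn, eq_div_iff h0]
  linarith [h3]

lemma integrableOn_beta {a b : ℝ} (ha : 0 < a) (hb : 0 < b) :
    IntegrableOn (fun p : ℝ => p ^ (a-1) * (1-p) ^ (b-1)) (Set.Ioo 0 1) := by
  have h := (Complex.betaIntegral_convergent (u := (a:ℂ)) (v := (b:ℂ))
    (by simpa using ha) (by simpa using hb)).1
  have h2 : IntegrableOn
      (fun x : ℝ => ((x:ℂ) ^ ((a:ℂ)-1) * (1 - (x:ℂ)) ^ ((b:ℂ)-1)).re) (Set.Ioo 0 1) := by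
    exact ((h.mono_set Set.Ioo_subset_Ioc_self)).re
  refine h2.congr_fun (fun x hx => ?_) measurableSet_Ioo
  have h1x : (0:ℝ) ≤ 1 - x := by linarith [hx.2]
  beta_reduce
  rw [show ((a:ℂ)-1) = ((a-1 : ℝ):ℂ) by push_cast; ring,
    show ((b:ℂ)-1) = ((b-1 : ℝ):ℂ) by push_cast; ring,
    show (1 - (x:ℂ)) = ((1-x : ℝ):ℂ) by push_cast; ring,
    ← Complex.ofReal_cpow hx.1.le, ← Complex.ofReal_cpow h1x, ← Complex.ofReal_mul,
    Complex.ofReal_re]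

lemma integral_gamma {c Tv : ℝ} (hc : 0 < c) (hT : 0 < Tv) :
    ∫ η in Set.Ioi (0:ℝ), η ^ (c-1) * Real.exp (-η/Tv) = Tv ^ c * Real.Gamma c := by
  have h := Real.integral_rpow_mul_exp_neg_mul_Ioi hc (inv_pos.mpr hT)
  rw [show ((1:ℝ)/Tv⁻¹) = Tv by field_simp] at h
  rw [← h]
  refine setIntegral_congr_fun measurableSet_Ioi fun x hx => ?_
  rw [neg_div]
  ring_nf

lemma integrableOn_gamma {c Tv : ℝ} (hc : 0 < c) (hT : 0 < Tv) :
    IntegrableOn (fun η : ℝ => η ^ (c-1) * Real.exp (-η/Tv)) (Set.Ioi 0) := by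
  have h := integrableOn_rpow_mul_exp_neg_mul_rpow (s := c-1) (p := 1) (b := Tv⁻¹)
    (by linarith) zero_lt_one (inv_pos.mpr hT)
  refine h.congr_fun (fun x hx => ?_) measurableSet_Ioi
  beta_reduce
  rw [Real.rpow_one, neg_div]
  ring_nf

lemma betaFn_pos {a b : ℝ} (ha : 0 < a) (hb : 0 < b) : 0 < betaFn a b := by
  unfold betaFn
  have := Real.Gamma_pos_of_pos ha
  have := Real.Gamma_pos_of_pos hb
  have := Real.Gamma_pos_of_pos (by linarith : 0 < a + b)
  positivity

lemma sum_choose_betaFn {a b : ℝ} (ha : 0 < a) (hb : 0 < b) (N : ℕ) :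
    ∑ k ∈ Finset.range (N+1),
      (N.choose k : ℝ) * betaFn ((k:ℝ)+a) (((N-k:ℕ):ℝ)+b) = betaFn a b := by
  rw [← integral_beta ha hb]
  have hterm : ∀ k ∈ Finset.range (N+1),
      (N.choose k : ℝ) * betaFn ((k:ℝ)+a) (((N-k:ℕ):ℝ)+b)
      = ∫ p in Set.Ioo (0:ℝ) 1,
          (N.choose k : ℝ) * (p^((k:ℝ)+a-1) * (1-p)^(((N-k:ℕ):ℝ)+b-1)) := by
    intro k _
    rw [MeasureTheory.integral_const_mul, integral_beta (by positivity) (by positivity)]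
  rw [Finset.sum_congr rfl hterm, ← MeasureTheory.integral_finset_sum]
  · refine setIntegral_congr_fun measurableSet_Ioo fun p hp => ?_
    have hp0 : (0:ℝ) < p := hp.1
    have hp1 : (0:ℝ) < 1 - p := by linarith [hp.2]
    have e1 : ∀ k : ℕ, p ^ ((k:ℝ)+a-1) = p ^ k * p ^ (a-1) := by
      intro k
      rw [show (k:ℝ)+a-1 = (k:ℝ)+(a-1) by ring, Real.rpow_add hp0, Real.rpow_natCast]
    have e2 : ∀ k : ℕ, (1-p) ^ (((N-k:ℕ)):ℝ) * (1-p) ^ (b-1) = (1-p) ^ (((N-k:ℕ):ℝ)+b-1) := by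
      intro k
      rw [show ((N-k:ℕ):ℝ)+b-1 = ((N-k:ℕ):ℝ)+(b-1) by ring, Real.rpow_add hp1]
    calc ∑ k ∈ Finset.range (N+1),
          (N.choose k : ℝ) * (p^((k:ℝ)+a-1) * (1-p)^(((N-k:ℕ):ℝ)+b-1))
        = (∑ k ∈ Finset.range (N+1), p ^ k * (1-p) ^ (N-k) * (N.choose k : ℝ))
            * (p ^ (a-1) * (1-p) ^ (b-1)) := by
          rw [Finset.sum_mul]
          refine Finset.sum_congr rfl fun k hk => ?_
          rw [e1 k, ← e2 k, Real.rpow_natCast]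
          ring
      _ = p ^ (a-1) * (1-p) ^ (b-1) := by
          rw [← add_pow]
          norm_num
  · intro k _
    exact (integrableOn_beta (a := (k:ℝ)+a) (b := ((N-k:ℕ):ℝ)+b)
      (by positivity) (by positivity)).const_mul _


section Edges

variable {V Bd : Type*} [Fintype V] [DecidableEq V] [Fintype Bd] [DecidableEq Bd]
  (ω : V → ℕ) (T : Bd → ℝ) (n : V → ℕ) (nh : Bd → ℕ) (ξ : V → ℝ)

lemma prod_split_one (f : V → ℝ) (u : V) :
    ∏ w, f w = f u * ∏ w ∈ Finset.univ.erase u, f w :=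
  (Finset.mul_prod_erase _ _ (Finset.mem_univ u)).symm

lemma prod_split_two (f : V → ℝ) {u v : V} (h : u ≠ v) :
    ∏ w, f w = f u * (f v * ∏ w ∈ (Finset.univ.erase u).erase v, f w) := by
  rw [prod_split_one f u,
    ← Finset.mul_prod_erase _ f (Finset.mem_erase.mpr ⟨h.symm, Finset.mem_univ v⟩)]

lemma boundary_edge (hω : ∀ u, 0 < ω u) (hT : ∀ v, 0 < T v) (u : V) (v : Bd) :
    ∫ η in Set.Ioi (0:ℝ),
        (η ^ ((ω u : ℝ)/2 - 1) * Real.exp (-η / T v) /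
          (T v ^ ((ω u : ℝ)/2) * Real.Gamma ((ω u : ℝ)/2))) *
        (dualityF ω T n nh (Function.update ξ u η) - dualityF ω T n nh ξ)
      = dualityF ω T (Function.update n u 0) (Function.update nh v (nh v + n u)) ξ
        - dualityF ω T n nh ξ := by
  set a : ℝ := (ω u : ℝ)/2 with ha_def
  have ha : 0 < a := by
    have := hω u; positivity
  have hTv : 0 < T v := hT v
  set m : ℕ := n u with hm_def
  set R : ℝ := ∏ w ∈ Finset.univ.erase u,
      ξ w ^ n w * Real.Gamma ((ω w : ℝ)/2) / Real.Gamma ((n w : ℝ) + (ω w : ℝ)/2) with hR_def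
  set S : ℝ := ∏ v', T v' ^ nh v' with hS_def
  have hGa := Real.Gamma_pos_of_pos ha
  have hGma := Real.Gamma_pos_of_pos (by positivity : (0:ℝ) < (m:ℝ) + a)
  -- value of F at updated ξ
  have hFup : ∀ η : ℝ, dualityF ω T n nh (Function.update ξ u η)
      = η ^ m * Real.Gamma a / Real.Gamma ((m:ℝ) + a) * (R * S) := by
    intro η
    rw [dualityF, prod_split_one (f := fun w => (Function.update ξ u η w) ^ n w *
      Real.Gamma ((ω w : ℝ)/2) / Real.Gamma ((n w : ℝ) + (ω w : ℝ)/2)) u]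
    rw [Function.update_self]
    have : ∏ w ∈ Finset.univ.erase u, (Function.update ξ u η w) ^ n w *
        Real.Gamma ((ω w : ℝ)/2) / Real.Gamma ((n w : ℝ) + (ω w : ℝ)/2) = R := by
      refine Finset.prod_congr rfl fun w hw => ?_
      rw [Function.update_of_ne (Finset.mem_erase.mp hw).1]
    rw [this]; ring
  have hF : dualityF ω T n nh ξ = ξ u ^ m * Real.Gamma a / Real.Gamma ((m:ℝ) + a) * (R * S) := by
    rw [dualityF, prod_split_one (f := fun w => ξ w ^ n w *
      Real.Gamma ((ω w : ℝ)/2) / Real.Gamma ((n w : ℝ) + (ω w : ℝ)/2)) u]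
    ring
  -- RHS value
  have hRHS : dualityF ω T (Function.update n u 0) (Function.update nh v (nh v + m)) ξ
      = T v ^ m * (R * S) := by
    rw [dualityF, prod_split_one (f := fun w => ξ w ^ (Function.update n u 0 w) *
      Real.Gamma ((ω w : ℝ)/2) / Real.Gamma (((Function.update n u 0 w : ℕ) : ℝ) + (ω w : ℝ)/2)) u]
    rw [prod_split_one (V := Bd) (f := fun v' => T v' ^ (Function.update nh v (nh v + m) v')) v]
    rw [Function.update_self, Function.update_self]
    have h1 : ∏ w ∈ Finset.univ.erase u, ξ w ^ (Function.update n u 0 w) *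
        Real.Gamma ((ω w : ℝ)/2) / Real.Gamma (((Function.update n u 0 w : ℕ) : ℝ) + (ω w : ℝ)/2)
        = R := by
      refine Finset.prod_congr rfl fun w hw => ?_
      rw [Function.update_of_ne (Finset.mem_erase.mp hw).1]
    have h2 : ∏ v' ∈ Finset.univ.erase v, T v' ^ (Function.update nh v (nh v + m) v')
        = ∏ v' ∈ Finset.univ.erase v, T v' ^ nh v' := by
      refine Finset.prod_congr rfl fun w hw => ?_
      rw [Function.update_of_ne (Finset.mem_erase.mp hw).1]
    rw [h1, h2, hS_def, prod_split_one (V := Bd) (f := fun v' => T v' ^ nh v') v]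
    simp only [Nat.cast_zero, pow_zero, pow_add]
    field_simp
    rw [show (2 * 0 + (ω u : ℝ)) / 2 = (ω u : ℝ) / 2 by ring, ← ha_def, mul_assoc]
    exact mul_div_cancel_left₀ _ hGa.ne'
  -- rewrite the integrand
  have hcong : ∀ η ∈ Set.Ioi (0:ℝ),
      (η ^ (a - 1) * Real.exp (-η / T v) / (T v ^ a * Real.Gamma a)) *
        (dualityF ω T n nh (Function.update ξ u η) - dualityF ω T n nh ξ)
      = (η ^ ((m:ℝ) + a - 1) * Real.exp (-η / T v)) *
          (Real.Gamma a / Real.Gamma ((m:ℝ) + a) * (R * S) / (T v ^ a * Real.Gamma a))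
        - (η ^ (a - 1) * Real.exp (-η / T v)) *
          (dualityF ω T n nh ξ / (T v ^ a * Real.Gamma a)) := by
    intro η hη
    have hη0 : (0:ℝ) < η := hη
    rw [hFup η]
    have : η ^ ((m:ℝ) + a - 1) = η ^ m * η ^ (a-1) := by
      rw [show (m:ℝ)+a-1 = (m:ℝ)+(a-1) by ring, Real.rpow_add hη0, Real.rpow_natCast]
    rw [this]
    ring
  rw [setIntegral_congr_fun measurableSet_Ioi hcong,
    MeasureTheory.integral_sub ((integrableOn_gamma (by positivity) hTv).mul_const _)
      ((integrableOn_gamma ha hTv).mul_const _),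
    MeasureTheory.integral_mul_const, MeasureTheory.integral_mul_const,
    integral_gamma (by positivity) hTv, integral_gamma ha hTv, hRHS, hF]
  have hTma : T v ^ ((m:ℝ) + a) = T v ^ (m:ℕ) * T v ^ a := by
    rw [Real.rpow_add hTv, Real.rpow_natCast]
  rw [hTma]
  have hTa : (0:ℝ) < T v ^ a := Real.rpow_pos_of_pos hTv a
  field_simp

end Edges

section Bulk

variable {V Bd : Type*} [Fintype V] [DecidableEq V] [Fintype Bd] [DecidableEq Bd]
  (ω : V → ℕ) (T : Bd → ℝ) (n : V → ℕ) (nh : Bd → ℕ) (ξ : V → ℝ)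

lemma algebra1 (ch X ka kb G B gab PS F : ℝ) (hka : ka ≠ 0) (hkb : kb ≠ 0)
    (hG : G ≠ 0) (hB : B ≠ 0) :
    ch * (ka * kb / G / B) * (X * (gab / (ka * kb)) * PS - F)
      = X * ch * (gab * PS / (B * G)) - ch * (ka * kb / G) * (F / B) := by
  field_simp

lemma algebra2 (ka kb G B gab X PS F : ℝ) (hka : ka ≠ 0) (hkb : kb ≠ 0)
    (hG : G ≠ 0) (hB : B ≠ 0) :
    ka * kb / G * (X * (gab / (ka * kb)) * PS / B) - B * (F / B)
      = gab * X * PS / (B * G) - F := by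
  field_simp

lemma bulk_edge (hω : ∀ u, 0 < ω u) {u v : V} (huv : u ≠ v) :
    ∫ p in Set.Ioo (0:ℝ) 1,
        (p ^ ((ω u : ℝ)/2 - 1) * (1-p) ^ ((ω v : ℝ)/2 - 1) /
          betaFn ((ω u : ℝ)/2) ((ω v : ℝ)/2)) *
        (dualityF ω T n nh (energyUpdate ξ u v p) - dualityF ω T n nh ξ)
    = ∑ k ∈ Finset.range (n u + n v + 1),
        ((n u + n v).choose k : ℝ) *
          (betaFn ((k:ℝ) + (ω u : ℝ)/2) (((n u + n v - k : ℕ):ℝ) + (ω v : ℝ)/2) /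
            betaFn ((ω u : ℝ)/2) ((ω v : ℝ)/2)) *
        (dualityF ω T (particleUpdate n u v k) nh ξ - dualityF ω T n nh ξ) := by
  set a : ℝ := (ω u : ℝ)/2 with ha_def
  set b : ℝ := (ω v : ℝ)/2 with hb_def
  have ha : 0 < a := by rw [ha_def]; have := hω u; positivity
  have hb : 0 < b := by rw [hb_def]; have := hω v; positivity
  set N : ℕ := n u + n v with hN_def
  set P : ℝ := ∏ w ∈ (Finset.univ.erase u).erase v,
      ξ w ^ n w * Real.Gamma ((ω w : ℝ)/2) / Real.Gamma ((n w : ℝ) + (ω w : ℝ)/2) with hP_def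
  set S : ℝ := ∏ v', T v' ^ nh v' with hS_def
  have hB := betaFn_pos ha hb
  have hGa := Real.Gamma_pos_of_pos ha
  have hGb := Real.Gamma_pos_of_pos hb
  have hGnua := Real.Gamma_pos_of_pos (by positivity : (0:ℝ) < (n u : ℝ) + a)
  have hGnvb := Real.Gamma_pos_of_pos (by positivity : (0:ℝ) < (n v : ℝ) + b)
  have hGN := Real.Gamma_pos_of_pos (by positivity : (0:ℝ) < (N : ℝ) + (a + b))
  -- values of F
  have hF : dualityF ω T n nh ξ
      = ξ u ^ n u * ξ v ^ n v * (Real.Gamma a * Real.Gamma b /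
          (Real.Gamma ((n u : ℝ) + a) * Real.Gamma ((n v : ℝ) + b))) * (P * S) := by
    rw [dualityF, prod_split_two (f := fun w => ξ w ^ n w *
      Real.Gamma ((ω w : ℝ)/2) / Real.Gamma ((n w : ℝ) + (ω w : ℝ)/2)) huv, ← hP_def, ← hS_def]
    simp only [← ha_def, ← hb_def]
    ring
  have hFup : ∀ p : ℝ, dualityF ω T n nh (energyUpdate ξ u v p)
      = p ^ n u * (1-p) ^ n v * (ξ u + ξ v) ^ N *
        (Real.Gamma a * Real.Gamma b /
          (Real.Gamma ((n u : ℝ) + a) * Real.Gamma ((n v : ℝ) + b))) * (P * S) := by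
    intro p
    rw [dualityF, prod_split_two (f := fun w => (energyUpdate ξ u v p w) ^ n w *
      Real.Gamma ((ω w : ℝ)/2) / Real.Gamma ((n w : ℝ) + (ω w : ℝ)/2)) huv]
    have hu' : energyUpdate ξ u v p u = p * (ξ u + ξ v) := by simp [energyUpdate]
    have hv' : energyUpdate ξ u v p v = (1 - p) * (ξ u + ξ v) := by
      simp [energyUpdate, Ne.symm huv]
    have hPP : ∏ w ∈ (Finset.univ.erase u).erase v, (energyUpdate ξ u v p w) ^ n w *
        Real.Gamma ((ω w : ℝ)/2) / Real.Gamma ((n w : ℝ) + (ω w : ℝ)/2) = P := by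
      rw [hP_def]
      refine Finset.prod_congr rfl fun w hw => ?_
      have hw2 := Finset.mem_erase.mp hw
      have hw3 := Finset.mem_erase.mp hw2.2
      rw [show energyUpdate ξ u v p w = ξ w by simp [energyUpdate, hw3.1, hw2.1]]
    rw [hu', hv', hPP, ← hS_def, hN_def, mul_pow, mul_pow]
    simp only [← ha_def, ← hb_def]
    ring
  have hFk : ∀ k : ℕ, dualityF ω T (particleUpdate n u v k) nh ξ
      = ξ u ^ k * ξ v ^ (N - k) *
        (Real.Gamma a * Real.Gamma b /
          (Real.Gamma ((k : ℝ) + a) * Real.Gamma (((N - k : ℕ) : ℝ) + b))) * (P * S) := by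
    intro k
    rw [dualityF, prod_split_two (f := fun w => ξ w ^ (particleUpdate n u v k w) *
      Real.Gamma ((ω w : ℝ)/2) /
      Real.Gamma (((particleUpdate n u v k w : ℕ) : ℝ) + (ω w : ℝ)/2)) huv]
    have hu' : particleUpdate n u v k u = k := by simp [particleUpdate]
    have hv' : particleUpdate n u v k v = N - k := by
      rw [hN_def]; simp [particleUpdate, Ne.symm huv]
    have hPP : ∏ w ∈ (Finset.univ.erase u).erase v, ξ w ^ (particleUpdate n u v k w) *
        Real.Gamma ((ω w : ℝ)/2) /
        Real.Gamma (((particleUpdate n u v k w : ℕ) : ℝ) + (ω w : ℝ)/2) = P := by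
      rw [hP_def]
      refine Finset.prod_congr rfl fun w hw => ?_
      have hw2 := Finset.mem_erase.mp hw
      have hw3 := Finset.mem_erase.mp hw2.2
      rw [show particleUpdate n u v k w = n w by simp [particleUpdate, hw3.1, hw2.1]]
    rw [hu', hv', hPP, ← hS_def]
    simp only [← ha_def, ← hb_def]
    ring
  -- the common closed form
  set M : ℝ := Real.Gamma a * Real.Gamma b * (ξ u + ξ v) ^ N * (P * S) /
      (betaFn a b * Real.Gamma ((N : ℝ) + (a + b))) - dualityF ω T n nh ξ with hM_def
  have hLHS : ∫ p in Set.Ioo (0:ℝ) 1,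
      (p ^ (a - 1) * (1-p) ^ (b - 1) / betaFn a b) *
        (dualityF ω T n nh (energyUpdate ξ u v p) - dualityF ω T n nh ξ) = M := by
    have hcong : ∀ p ∈ Set.Ioo (0:ℝ) 1,
        (p ^ (a - 1) * (1-p) ^ (b - 1) / betaFn a b) *
          (dualityF ω T n nh (energyUpdate ξ u v p) - dualityF ω T n nh ξ)
        = (p ^ ((n u : ℝ) + a - 1) * (1-p) ^ ((n v : ℝ) + b - 1)) *
            ((ξ u + ξ v) ^ N * (Real.Gamma a * Real.Gamma b /
              (Real.Gamma ((n u : ℝ) + a) * Real.Gamma ((n v : ℝ) + b))) * (P * S) / betaFn a b)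
          - (p ^ (a - 1) * (1-p) ^ (b - 1)) * (dualityF ω T n nh ξ / betaFn a b) := by
      intro p hp
      have hp0 : (0:ℝ) < p := hp.1
      have hp1 : (0:ℝ) < 1 - p := by linarith [hp.2]
      rw [hFup p,
        show p ^ ((n u : ℝ) + a - 1) = p ^ n u * p ^ (a - 1) by
          rw [show (n u : ℝ) + a - 1 = (n u : ℝ) + (a-1) by ring, Real.rpow_add hp0,
            Real.rpow_natCast],
        show (1-p) ^ ((n v : ℝ) + b - 1) = (1-p) ^ n v * (1-p) ^ (b - 1) by
          rw [show (n v : ℝ) + b - 1 = (n v : ℝ) + (b-1) by ring, Real.rpow_add hp1,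
            Real.rpow_natCast]]
      ring
    rw [setIntegral_congr_fun measurableSet_Ioo hcong,
      MeasureTheory.integral_sub
        ((integrableOn_beta (by positivity) (by positivity)).mul_const _)
        ((integrableOn_beta ha hb).mul_const _),
      MeasureTheory.integral_mul_const, MeasureTheory.integral_mul_const,
      integral_beta (by positivity) (by positivity), integral_beta ha hb, hM_def]
    rw [show betaFn ((n u : ℝ) + a) ((n v : ℝ) + b) = Real.Gamma ((n u : ℝ) + a) *
        Real.Gamma ((n v : ℝ) + b) / Real.Gamma ((N : ℝ) + (a + b)) by
      rw [betaFn, show (n u : ℝ) + a + ((n v : ℝ) + b) = (N : ℝ) + (a + b) by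
        rw [hN_def]; push_cast; ring]]
    exact algebra2 _ _ _ _ _ _ _ _ hGnua.ne' hGnvb.ne' hGN.ne' hB.ne' 
  have hRHS : ∑ k ∈ Finset.range (N + 1),
      (N.choose k : ℝ) * (betaFn ((k:ℝ) + a) (((N - k : ℕ):ℝ) + b) / betaFn a b) *
        (dualityF ω T (particleUpdate n u v k) nh ξ - dualityF ω T n nh ξ) = M := by
    have hsplit : ∀ k ∈ Finset.range (N + 1),
        (N.choose k : ℝ) * (betaFn ((k:ℝ) + a) (((N - k : ℕ):ℝ) + b) / betaFn a b) *
          (dualityF ω T (particleUpdate n u v k) nh ξ - dualityF ω T n nh ξ)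
        = ξ u ^ k * ξ v ^ (N - k) * (N.choose k : ℝ) *
            (Real.Gamma a * Real.Gamma b * (P * S) /
              (betaFn a b * Real.Gamma ((N : ℝ) + (a + b))))
          - (N.choose k : ℝ) * betaFn ((k:ℝ) + a) (((N - k : ℕ):ℝ) + b) *
            (dualityF ω T n nh ξ / betaFn a b) := by
      intro k hk
      have hkN : k ≤ N := Nat.lt_succ_iff.mp (Finset.mem_range.mp hk)
      have hGka := Real.Gamma_pos_of_pos (by positivity : (0:ℝ) < (k : ℝ) + a)
      have hGNkb := Real.Gamma_pos_of_pos (by positivity : (0:ℝ) < ((N - k : ℕ) : ℝ) + b)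
      rw [hFk k,
        show betaFn ((k:ℝ) + a) (((N - k : ℕ):ℝ) + b) = Real.Gamma ((k:ℝ) + a) *
          Real.Gamma (((N - k : ℕ):ℝ) + b) / Real.Gamma ((N : ℝ) + (a + b)) by
          rw [betaFn, show (k : ℝ) + a + ((((N - k : ℕ)):ℝ) + b) = (N : ℝ) + (a + b) by
            rw [Nat.cast_sub hkN]; ring]]
      exact algebra1 _ _ _ _ _ _ _ _ _ hGka.ne' hGNkb.ne' hGN.ne' hB.ne' 
    rw [Finset.sum_congr rfl hsplit, Finset.sum_sub_distrib, hM_def]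
    congr 1
    · rw [← Finset.sum_mul, ← add_pow]
      ring
    · rw [← Finset.sum_mul, sum_choose_betaFn ha hb N]
      field_simp
  rw [hLHS, ← hRHS]

end Bulk

/-- The duality identity `G F = A F` between the generator `G` of the inhomogeneous
energy-exchange process and the generator `A` of the dual particle process, applied to
the duality function `F`. -/
theorem generator_duality {V Bd : Type*}
    [Fintype V] [DecidableEq V] [Fintype Bd] [DecidableEq Bd]
    (E : Finset (V × V)) (Ebd : Finset (V × Bd))
    (rE : V × V → ℝ) (rBd : V × Bd → ℝ)
    (ω : V → ℕ) (T : Bd → ℝ)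
    (hE : ∀ e ∈ E, 0 < rE e ∧ e.1 ≠ e.2)
    (hEbd : ∀ e ∈ Ebd, 0 < rBd e)
    (hω : ∀ u, 0 < ω u) (hT : ∀ v, 0 < T v)
    (ξ : V → ℝ) (hξ : ∀ u, 0 ≤ ξ u)
    (n : V → ℕ) (nh : Bd → ℕ) :
    -- `(G F(n, n̂, ·))(ξ)` :
    (∑ e ∈ E, rE e *
        ∫ p in Set.Ioo (0 : ℝ) 1,
          (p ^ ((ω e.1 : ℝ) / 2 - 1) * (1 - p) ^ ((ω e.2 : ℝ) / 2 - 1) /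
              betaFn ((ω e.1 : ℝ) / 2) ((ω e.2 : ℝ) / 2)) *
            (dualityF ω T n nh (energyUpdate ξ e.1 e.2 p) - dualityF ω T n nh ξ))
      + ∑ e ∈ Ebd, rBd e *
          ∫ η in Set.Ioi (0 : ℝ),
            (η ^ ((ω e.1 : ℝ) / 2 - 1) * Real.exp (-η / T e.2) /
                (T e.2 ^ ((ω e.1 : ℝ) / 2) * Real.Gamma ((ω e.1 : ℝ) / 2))) *
              (dualityF ω T n nh (Function.update ξ e.1 η) - dualityF ω T n nh ξ)
    =
    -- `(A F(·, ·, ξ))(n, n̂)` :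
    (∑ e ∈ E, rE e *
        ∑ k ∈ Finset.range (n e.1 + n e.2 + 1),
          ((n e.1 + n e.2).choose k : ℝ) *
            (betaFn ((k : ℝ) + (ω e.1 : ℝ) / 2)
                (((n e.1 + n e.2 - k : ℕ) : ℝ) + (ω e.2 : ℝ) / 2) /
              betaFn ((ω e.1 : ℝ) / 2) ((ω e.2 : ℝ) / 2)) *
            (dualityF ω T (particleUpdate n e.1 e.2 k) nh ξ - dualityF ω T n nh ξ))
      + ∑ e ∈ Ebd, rBd e *
          (dualityF ω T (Function.update n e.1 0)
              (Function.update nh e.2 (nh e.2 + n e.1)) ξ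
            - dualityF ω T n nh ξ) := by
  congr 1
  · refine Finset.sum_congr rfl fun e he => ?_
    rw [bulk_edge ω T n nh ξ hω (hE e he).2]
  · refine Finset.sum_congr rfl fun e he => ?_
    rw [boundary_edge ω T n nh ξ hω hT e.1 e.2]
end
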